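/- arXiv:1710.06302 — 5 statements merged into one kernel-verified Lean document; each statement's English description precedes it below -/
import Mathlib

section
/- Under the closed-loop dynamics induced by the longest-time-to-go-first policy, the ordering of device states is preserved: if x_i(0) ≥ x_j(0) then x_i(t) ≥ x_j(t) for all t ≥ 0. -/
open Set

/-- A power reference signal `Pr` is feasible for devices with maximum powers `pbar`
and initial times-to-go `x`. -/
def Feasible (n : ℕ) (pbar x : Fin n → ℝ) (Pr : ℝ → ℝ) : Prop :=
  ∃ u z : ℝ → Fin n → ℝ,
    (∀ i, z 0 i = x i) ∧
    (∀ t, 0 ≤ t → ∀ i, u t i ∈ Set.Icc 0 (pbar i)) ∧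
    (∀ t, 0 ≤ t → ∑ i, u t i = Pr t) ∧
    (∀ t, 0 ≤ t → ∀ i, HasDerivAt (fun s => z s i) (-(u t i) / pbar i) t) ∧
    (∀ t, 0 ≤ t → ∀ i, 0 ≤ z t i)

/-- Truncation of a reference signal to `[0, t)`. -/
noncomputable def trunc (Pr : ℝ → ℝ) (t : ℝ) : ℝ → ℝ :=
  fun τ => if τ ∈ Set.Ico 0 t then Pr τ else 0

/-- Time to failure: supremum of times `t` such that the truncated reference is feasible. -/
noncomputable def timeToFailure (n : ℕ) (pbar x : Fin n → ℝ) (Pr : ℝ → ℝ) : ENNReal :=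
  ⨆ t ∈ {t : ℝ | 0 ≤ t ∧ Feasible n pbar x (trunc Pr t)}, ENNReal.ofReal t

/-- Maximum instantaneous power available in state `x`. -/
noncomputable def availPower (n : ℕ) (pbar x : Fin n → ℝ) : ℝ :=
  ∑ i ∈ Finset.univ.filter (fun i => 0 < x i), pbar i

/-- The longest-time-to-go-first (waterfall) policy: device `i` (if nonempty) runs at
the common fraction of maximum power of its equal-time-to-go group, where the group's
fraction saturates the request left over by all strictly higher groups. -/
noncomputable def kappa (n : ℕ) (pbar x : Fin n → ℝ) (Pr : ℝ) : Fin n → ℝ :=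
  fun i =>
    if 0 < x i then
      pbar i * max 0 (min 1
        ((Pr - ∑ j ∈ Finset.univ.filter (fun j => x i < x j), pbar j) /
          (∑ j ∈ Finset.univ.filter (fun j => x j = x i), pbar j)))
    else 0

/-- Closed-loop dynamics under the policy `kappa`. -/
def ClosedLoop (n : ℕ) (pbar : Fin n → ℝ) (Pr : ℝ → ℝ) (z : ℝ → Fin n → ℝ) : Prop :=
  ∀ t, 0 ≤ t → ∀ i,
    HasDerivAt (fun s => z s i) (-(kappa n pbar (z t) (Pr t) i) / pbar i) t

/-- A state trajectory fulfils a reference signal (for all `t ≥ 0`). -/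
def Fulfils (n : ℕ) (pbar : Fin n → ℝ) (Pr : ℝ → ℝ) (z : ℝ → Fin n → ℝ) : Prop :=
  ∃ u : ℝ → Fin n → ℝ,
    (∀ t, 0 ≤ t → ∀ i, u t i ∈ Set.Icc 0 (pbar i)) ∧
    (∀ t, 0 ≤ t → ∑ i, u t i = Pr t) ∧
    (∀ t, 0 ≤ t → ∀ i, HasDerivAt (fun s => z s i) (-(u t i) / pbar i) t) ∧
    (∀ t, 0 ≤ t → ∀ i, 0 ≤ z t i)

/-- A state trajectory fulfils a reference signal on `[0, T]`. -/
def FulfilsOn (n : ℕ) (pbar : Fin n → ℝ) (Pr : ℝ → ℝ) (z : ℝ → Fin n → ℝ) (T : ℝ) : Prop :=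
  ∃ u : ℝ → Fin n → ℝ,
    (∀ s ∈ Set.Icc 0 T, ∀ i, u s i ∈ Set.Icc 0 (pbar i)) ∧
    (∀ s ∈ Set.Icc 0 T, ∑ i, u s i = Pr s) ∧
    (∀ s ∈ Set.Icc 0 T, ∀ i, HasDerivAt (fun r => z r i) (-(u s i) / pbar i) s) ∧
    (∀ s ∈ Set.Icc 0 T, ∀ i, 0 ≤ z s i)

/-- Closed-loop dynamics under the policy `kappa`, on `[0, T]`. -/
def ClosedLoopOn (n : ℕ) (pbar : Fin n → ℝ) (Pr : ℝ → ℝ) (z : ℝ → Fin n → ℝ) (T : ℝ) : Prop :=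
  ∀ s ∈ Set.Icc 0 T, ∀ i,
    HasDerivAt (fun r => z r i) (-(kappa n pbar (z s) (Pr s) i) / pbar i) s


/-- The policy output is always nonnegative. -/
lemma kappa_nonneg (n : ℕ) (pbar x : Fin n → ℝ) (Pr : ℝ) (hp : ∀ i, 0 < pbar i) (i : Fin n) :
    0 ≤ kappa n pbar x Pr i := by
  unfold kappa
  split_ifs
  · exact mul_nonneg (hp i).le (le_max_left _ _)
  · exact le_refl 0

/-- A device with larger time-to-go runs at a larger (or equal) fraction of its
maximum power: the per-unit rate is monotone in the state value. -/
lemma rate_mono (n : ℕ) (pbar x : Fin n → ℝ) (Pr : ℝ) (hp : ∀ i, 0 < pbar i)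
    (i j : Fin n) (h : x i < x j) :
    kappa n pbar x Pr i / pbar i ≤ kappa n pbar x Pr j / pbar j := by
  by_cases hi : 0 < x i
  · have hj : 0 < x j := hi.trans h
    unfold kappa
    rw [if_pos hi, if_pos hj, mul_div_cancel_left₀ _ (hp i).ne', mul_div_cancel_left₀ _ (hp j).ne']
    set Aj := ∑ k ∈ Finset.univ.filter (fun k => x j < x k), pbar k with hAj
    set Bj := ∑ k ∈ Finset.univ.filter (fun k => x k = x j), pbar k with hBj
    set Ai := ∑ k ∈ Finset.univ.filter (fun k => x i < x k), pbar k with hAi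
    set Bi := ∑ k ∈ Finset.univ.filter (fun k => x k = x i), pbar k with hBi
    have hBjpos : 0 < Bj := by
      refine Finset.sum_pos (fun k _ => hp k) ⟨j, ?_⟩
      simp [Finset.mem_filter]
    have hBipos : 0 < Bi := by
      refine Finset.sum_pos (fun k _ => hp k) ⟨i, ?_⟩
      simp [Finset.mem_filter]
    rcases le_or_gt 1 ((Pr - Aj) / Bj) with h1 | h1
    · rw [min_eq_left h1, max_eq_right zero_le_one]
      exact max_le zero_le_one (le_trans (min_le_left _ _) le_rfl)
    · -- the group of j does not saturate, so the group of i gets nothing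
      have hPr : Pr < Aj + Bj := by
        have := (div_lt_one hBjpos).mp h1
        linarith
      have hsub : Aj + Bj ≤ Ai := by
        have hdisj : Disjoint (Finset.univ.filter (fun k => x j < x k))
            (Finset.univ.filter (fun k => x k = x j)) := by
          rw [Finset.disjoint_left]
          intro k hk1 hk2
          simp only [Finset.mem_filter, Finset.mem_univ, true_and] at hk1 hk2
          exact absurd (hk2 ▸ hk1) (lt_irrefl _)
        rw [hAj, hBj, ← Finset.sum_union hdisj]
        refine Finset.sum_le_sum_of_subset_of_nonneg ?_ (fun k _ _ => (hp k).le)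
        intro k hk
        simp only [Finset.mem_union, Finset.mem_filter, Finset.mem_univ, true_and] at hk ⊢
        rcases hk with hk | hk
        · exact h.trans hk
        · exact hk ▸ h
      have hqi : (Pr - Ai) / Bi < 0 :=
        div_neg_of_neg_of_pos (by linarith) hBipos
      rw [min_eq_right (hqi.le.trans zero_le_one), max_eq_left hqi.le]
      exact le_max_left _ _
  · have h1 : kappa n pbar x Pr i = 0 := by unfold kappa; rw [if_neg hi]
    rw [h1, zero_div]
    exact div_nonneg (kappa_nonneg n pbar x Pr hp j) (hp j).le

/-- the closed-loop dynamics preserve the ordering of device states. -/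
theorem closedLoop_order_preserved (n : ℕ) (pbar : Fin n → ℝ) (Pr : ℝ → ℝ)
    (z : ℝ → Fin n → ℝ) (hp : ∀ i, 0 < pbar i)
    (hz : ∀ t, 0 ≤ t → ∀ i, 0 ≤ z t i)
    (hcl : ClosedLoop n pbar Pr z)
    (i j : Fin n) (hij : z 0 j ≤ z 0 i) :
    ∀ t, 0 ≤ t → z t j ≤ z t i := by
  intro t ht
  by_contra hcon
  push_neg at hcon
  -- work with the difference w = z · i - z · j
  set w : ℝ → ℝ := fun s => z s i - z s j with hw
  have hwd : ∀ s, 0 ≤ s → HasDerivAt w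
      (kappa n pbar (z s) (Pr s) j / pbar j - kappa n pbar (z s) (Pr s) i / pbar i) s := by
    intro s hs
    have hdi := hcl s hs i
    have hdj := hcl s hs j
    have := hdi.sub hdj
    convert this using 1
    · rfl
    · rfl
    · rfl
    · ring
  have hwc : ∀ s, 0 ≤ s → ContinuousAt w s := fun s hs => (hwd s hs).continuousAt
  have hw0 : 0 ≤ w 0 := sub_nonneg.mpr hij
  have hwt : w t < 0 := sub_neg.mpr hcon
  -- the last time before t where w is nonnegative
  set S : Set ℝ := {s | s ∈ Set.Icc 0 t ∧ 0 ≤ w s} with hS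
  have hSne : S.Nonempty := ⟨0, ⟨le_rfl, ht⟩, hw0⟩
  have hSbdd : BddAbove S := ⟨t, fun s hs => hs.1.2⟩
  set T := sSup S with hT
  have hST : IsClosed S := by
    have : S = Set.Icc 0 t ∩ w ⁻¹' Set.Ici 0 := by
      ext s
      simp only [hS, Set.mem_setOf_eq, Set.mem_inter_iff, Set.mem_preimage, Set.mem_Ici]
    rw [this]
    refine ContinuousOn.preimage_isClosed_of_isClosed ?_ isClosed_Icc isClosed_Ici
    exact fun s hs => (hwc s hs.1).continuousWithinAt
  have hTS : T ∈ S := hST.csSup_mem hSne hSbdd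
  have hT0 : 0 ≤ T := hTS.1.1
  have hTt : T ≤ t := hTS.1.2
  have hTwpos : 0 ≤ w T := hTS.2
  have hTlt : T < t := lt_of_le_of_ne hTt (by
    intro heq; rw [heq] at hTwpos; exact absurd hTwpos (not_le.mpr hwt))
  -- on (T, t], w is negative
  have hneg : ∀ s ∈ Set.Ioc T t, w s < 0 := by
    intro s hs
    by_contra hns
    push_neg at hns
    exact absurd (le_csSup hSbdd (⟨⟨hT0.trans hs.1.le, hs.2⟩, hns⟩ : s ∈ S)) (not_le.mpr hs.1)
  -- but where w < 0, the derivative of w is nonnegative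
  have hmono : MonotoneOn w (Set.Icc T t) := by
    have hint : interior (Set.Icc T t) = Set.Ioo T t := interior_Icc
    refine monotoneOn_of_deriv_nonneg (convex_Icc T t) ?_ ?_ ?_
    · exact fun s hs => (hwc s (hT0.trans hs.1)).continuousWithinAt
    · rw [hint]
      exact fun s hs => ((hwd s (hT0.trans hs.1.le)).differentiableAt).differentiableWithinAt
    · rw [hint]
      intro s hs
      have hs0 : 0 ≤ s := hT0.trans hs.1.le
      rw [(hwd s hs0).deriv]
      have hlt : z s i < z s j := sub_neg.mp (hneg s ⟨hs.1, hs.2.le⟩)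
      have := rate_mono n pbar (z s) (Pr s) hp i j hlt
      linarith
  have := hmono ⟨le_rfl, hTt⟩ ⟨hTlt.le, le_rfl⟩ hTlt.le
  linarith
end

section
/- Under the closed-loop dynamics induced by the longest-time-to-go-first policy, devices with equal initial times-to-go remain equal forever: x_i(0) = x_j(0) implies x_i(t) = x_j(t) for all t ≥ 0. -/
open Set

lemma rate_mono_aux (n : ℕ) (pbar : Fin n → ℝ) (hp : ∀ i, 0 < pbar i)
    (x : Fin n → ℝ) (P : ℝ) (i j : Fin n) (hij : x j ≤ x i) :
    kappa n pbar x P j / pbar j ≤ kappa n pbar x P i / pbar i := by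
  unfold kappa
  have hpi := hp i
  have hpj := hp j
  by_cases hj : 0 < x j
  · have hi : 0 < x i := lt_of_lt_of_le hj hij
    rw [if_pos hi, if_pos hj, mul_div_cancel_left₀ _ hpi.ne', mul_div_cancel_left₀ _ hpj.ne']
    rcases eq_or_lt_of_le hij with heq | hlt
    · rw [heq]
    · set a := x i
      set b := x j
      have hBa : 0 < ∑ k ∈ Finset.univ.filter (fun k => x k = a), pbar k := by
        refine lt_of_lt_of_le hpi (Finset.single_le_sum (fun k _ => (hp k).le) ?_)
        simp [a]
      have hBb : 0 < ∑ k ∈ Finset.univ.filter (fun k => x k = b), pbar k := by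
        refine lt_of_lt_of_le hpj (Finset.single_le_sum (fun k _ => (hp k).le) ?_)
        simp [b]
      set Aa := ∑ k ∈ Finset.univ.filter (fun k => a < x k), pbar k with hAa
      set Ba := ∑ k ∈ Finset.univ.filter (fun k => x k = a), pbar k with hBa'
      set Ab := ∑ k ∈ Finset.univ.filter (fun k => b < x k), pbar k with hAb
      have hsub : Aa + Ba ≤ Ab := by
        rw [hAa, hBa', hAb, ← Finset.sum_union]
        · refine Finset.sum_le_sum_of_subset_of_nonneg ?_ (fun k _ _ => (hp k).le)
          intro k hk
          simp only [Finset.mem_union, Finset.mem_filter, Finset.mem_univ, true_and] at hk ⊢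
          rcases hk with h | h
          · exact lt_trans hlt h
          · rw [h]; exact hlt
        · rw [Finset.disjoint_filter]
          intro k _ h1 h2
          exact absurd h2 (ne_of_gt h1)
      by_cases hqa : 1 ≤ (P - Aa) / Ba
      · rw [min_eq_left hqa, max_eq_right zero_le_one]
        exact max_le zero_le_one (min_le_left _ _)
      · push_neg at hqa
        have hP : P < Aa + Ba := by
          have := (div_lt_one hBa).mp hqa
          linarith
        have hqb : (P - Ab) / _ < 0 := div_neg_of_neg_of_pos (by linarith) hBb
        rw [max_eq_left (le_of_lt (lt_of_le_of_lt (min_le_right _ _) hqb))]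
        exact le_max_left _ _
  · rw [if_neg hj]
    simp only [zero_div]
    by_cases hi : 0 < x i
    · rw [if_pos hi]
      positivity
    · rw [if_neg hi]; simp

/-- devices with equal initial times-to-go remain equal forever under the
closed-loop dynamics. -/
theorem closedLoop_equal_stay_equal (n : ℕ) (pbar : Fin n → ℝ) (Pr : ℝ → ℝ)
    (z : ℝ → Fin n → ℝ) (hp : ∀ i, 0 < pbar i)
    (hz : ∀ t, 0 ≤ t → ∀ i, 0 ≤ z t i)
    (hcl : ClosedLoop n pbar Pr z)
    (i j : Fin n) (hij : z 0 i = z 0 j) :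
    ∀ t, 0 ≤ t → z t i = z t j := by
  -- squared difference is antitone
  set q : ℝ → ℝ := fun s => (z s i - z s j) ^ 2 with hq
  have hderiv : ∀ t, 0 ≤ t →
      HasDerivAt q (2 * (z t i - z t j) ^ 1 *
        (-(kappa n pbar (z t) (Pr t) i) / pbar i -
          -(kappa n pbar (z t) (Pr t) j) / pbar j)) t := by
    intro t ht
    exact ((hcl t ht i).sub (hcl t ht j)).pow 2
  have hnonpos : ∀ t, 0 ≤ t →
      2 * (z t i - z t j) ^ 1 *
        (-(kappa n pbar (z t) (Pr t) i) / pbar i -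
          -(kappa n pbar (z t) (Pr t) j) / pbar j) ≤ 0 := by
    intro t ht
    rcases le_total (z t j) (z t i) with h | h
    · have := rate_mono_aux n pbar hp (z t) (Pr t) i j h
      have h1 : -(kappa n pbar (z t) (Pr t) i) / pbar i -
          -(kappa n pbar (z t) (Pr t) j) / pbar j ≤ 0 := by
        rw [neg_div, neg_div] at *
        linarith
      have h2 : 0 ≤ 2 * (z t i - z t j) ^ 1 := by
        have : 0 ≤ z t i - z t j := by linarith
        positivity
      exact mul_nonpos_of_nonneg_of_nonpos h2 h1
    · have := rate_mono_aux n pbar hp (z t) (Pr t) j i h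
      have h1 : 0 ≤ -(kappa n pbar (z t) (Pr t) i) / pbar i -
          -(kappa n pbar (z t) (Pr t) j) / pbar j := by
        rw [neg_div, neg_div] at *
        linarith
      have h2 : 2 * (z t i - z t j) ^ 1 ≤ 0 := by
        have : z t i - z t j ≤ 0 := by linarith
        nlinarith
      exact mul_nonpos_of_nonpos_of_nonneg h2 h1
  have hcont : ContinuousOn q (Set.Ici (0 : ℝ)) := by
    intro t ht
    exact ((hderiv t ht).continuousAt).continuousWithinAt
  have hanti : AntitoneOn q (Set.Ici (0 : ℝ)) := by
    apply antitoneOn_of_deriv_nonpos (convex_Ici 0) hcont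
    · intro t ht
      rw [interior_Ici] at ht
      exact ((hderiv t (le_of_lt ht)).differentiableAt).differentiableWithinAt
    · intro t ht
      rw [interior_Ici] at ht
      rw [(hderiv t (le_of_lt ht)).deriv]
      exact hnonpos t (le_of_lt ht)
  intro t ht
  have h0 : q 0 = 0 := by simp [hq, hij]
  have hle : q t ≤ q 0 := hanti (Set.self_mem_Ici) ht ht
  have hge : 0 ≤ q t := sq_nonneg _
  have : (z t i - z t j) ^ 2 = 0 := le_antisymm (h0 ▸ hle) hge
  have := pow_eq_zero_iff (n := 2) (by norm_num) |>.mp this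
  linarith [this]
end

section
/- Along any trajectory of the closed-loop system under the longest-time-to-go-first policy, the number of distinct values among the device states x_1(t),...,x_n(t) is non-increasing in t; consequently at most n transitions between the partition-induced regions of the state space occur along any trajectory. -/
open Set

/-- The per-device rate `kappa i / pbar i` depends only on the value `x i`. -/
lemma kappa_rate_eq_of_eq (n : ℕ) (pbar x : Fin n → ℝ) (P : ℝ) (i j : Fin n)
    (hpi : 0 < pbar i) (hpj : 0 < pbar j) (hij : x i = x j) :
    kappa n pbar x P i / pbar i = kappa n pbar x P j / pbar j := by
  unfold kappa
  by_cases h : 0 < x i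
  · rw [if_pos h, if_pos (hij ▸ h)]
    have h1 : (Finset.univ.filter (fun k => x i < x k)) =
        (Finset.univ.filter (fun k => x j < x k)) := by
      apply Finset.filter_congr; intro k _; rw [hij]
    have h2 : (Finset.univ.filter (fun k => x k = x i)) =
        (Finset.univ.filter (fun k => x k = x j)) := by
      apply Finset.filter_congr; intro k _; rw [hij]
    rw [h1, h2, mul_div_cancel_left₀ _ hpi.ne', mul_div_cancel_left₀ _ hpj.ne']
  · rw [if_neg h, if_neg (hij ▸ h)]
    simp

/-- Rates are nonnegative. -/
lemma kappa_rate_nonneg (n : ℕ) (pbar x : Fin n → ℝ) (P : ℝ) (i : Fin n)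
    (hpi : 0 < pbar i) : 0 ≤ kappa n pbar x P i / pbar i := by
  unfold kappa
  by_cases h : 0 < x i
  · rw [if_pos h]
    positivity
  · rw [if_neg h]
    simp

/-- Rates are at most one. -/
lemma kappa_rate_le_one (n : ℕ) (pbar x : Fin n → ℝ) (P : ℝ) (i : Fin n)
    (hpi : 0 < pbar i) : kappa n pbar x P i / pbar i ≤ 1 := by
  unfold kappa
  by_cases h : 0 < x i
  · rw [if_pos h, mul_div_cancel_left₀ _ hpi.ne']
    exact max_le zero_le_one (min_le_left _ _)
  · rw [if_neg h]; simp

/-- Monotonicity: a device with strictly larger time-to-go runs at a (weakly) larger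
fraction of its maximum power. -/
lemma kappa_rate_mono (n : ℕ) (pbar x : Fin n → ℝ) (P : ℝ) (i j : Fin n)
    (hp : ∀ k, 0 < pbar k) (hx : ∀ k, 0 ≤ x k) (hij : x j < x i) :
    kappa n pbar x P j / pbar j ≤ kappa n pbar x P i / pbar i := by
  have hxi : 0 < x i := lt_of_le_of_lt (hx j) hij
  by_cases hxj : 0 < x j
  · -- both positive
    set Si := ∑ k ∈ Finset.univ.filter (fun k => x i < x k), pbar k with hSi
    set Ti := ∑ k ∈ Finset.univ.filter (fun k => x k = x i), pbar k with hTi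
    set Sj := ∑ k ∈ Finset.univ.filter (fun k => x j < x k), pbar k with hSj
    set Tj := ∑ k ∈ Finset.univ.filter (fun k => x k = x j), pbar k with hTj
    have hTi_pos : 0 < Ti := by
      have hmem : i ∈ Finset.univ.filter (fun k => x k = x i) := by
        simp
      calc (0:ℝ) < pbar i := hp i
        _ ≤ Ti := Finset.single_le_sum (fun k _ => (hp k).le) hmem
    have hTj_pos : 0 < Tj := by
      have hmem : j ∈ Finset.univ.filter (fun k => x k = x j) := by
        simp
      calc (0:ℝ) < pbar j := hp j
        _ ≤ Tj := Finset.single_le_sum (fun k _ => (hp k).le) hmem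
    have hri : kappa n pbar x P i / pbar i = max 0 (min 1 ((P - Si) / Ti)) := by
      unfold kappa
      rw [if_pos hxi, mul_div_cancel_left₀ _ (hp i).ne']
    have hrj : kappa n pbar x P j / pbar j = max 0 (min 1 ((P - Sj) / Tj)) := by
      unfold kappa
      rw [if_pos hxj, mul_div_cancel_left₀ _ (hp j).ne']
    rw [hri, hrj]
    by_cases h1 : 1 ≤ (P - Si) / Ti
    · rw [min_eq_left h1]
      exact max_le (le_max_left _ _)
        (le_trans (min_le_left _ _) (le_max_right _ _))
    · push_neg at h1
      -- then P - Si < Ti, and Sj ≥ Si + Ti, so P - Sj < 0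
      have hPSi : P - Si < Ti := (div_lt_one hTi_pos).mp h1
      have hsub : Si + Ti ≤ Sj := by
        have hdisj : Disjoint (Finset.univ.filter (fun k => x i < x k))
            (Finset.univ.filter (fun k => x k = x i)) := by
          rw [Finset.disjoint_left]
          intro k hk1 hk2
          simp only [Finset.mem_filter, Finset.mem_univ, true_and] at hk1 hk2
          exact hk1.ne' hk2
        have hsubset : (Finset.univ.filter (fun k => x i < x k)) ∪
            (Finset.univ.filter (fun k => x k = x i)) ⊆
            (Finset.univ.filter (fun k => x j < x k)) := by
          intro k hk
          simp only [Finset.mem_union, Finset.mem_filter, Finset.mem_univ, true_and] at *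
          rcases hk with hk | hk
          · exact hij.trans hk
          · exact hk ▸ hij
        calc Si + Ti = ∑ k ∈ (Finset.univ.filter (fun k => x i < x k)) ∪
              (Finset.univ.filter (fun k => x k = x i)), pbar k :=
            (Finset.sum_union hdisj).symm
          _ ≤ Sj := Finset.sum_le_sum_of_subset_of_nonneg hsubset
              (fun k _ _ => (hp k).le)
      have hPSj : P - Sj < 0 := by linarith
      have : (P - Sj) / Tj < 0 := div_neg_of_neg_of_pos hPSj hTj_pos
      have hmin : min 1 ((P - Sj) / Tj) ≤ 0 := le_trans (min_le_right _ _) this.le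
      rw [max_eq_left hmin]
      exact le_max_left _ _
  · -- x j = 0 : rate j = 0
    have : kappa n pbar x P j = 0 := by unfold kappa; rw [if_neg hxj]
    rw [this, zero_div]
    exact kappa_rate_nonneg n pbar x P i (hp i)

/-- Equal states stay equal under the closed-loop dynamics. -/
lemma closedLoop_merge (n : ℕ) (pbar : Fin n → ℝ) (Pr : ℝ → ℝ) (z : ℝ → Fin n → ℝ)
    (hp : ∀ i, 0 < pbar i) (hz : ∀ t, 0 ≤ t → ∀ i, 0 ≤ z t i)
    (hcl : ClosedLoop n pbar Pr z) (i j : Fin n)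
    (s t : ℝ) (hs : 0 ≤ s) (hst : s ≤ t) (heq : z s i = z s j) :
    z t i = z t j := by
  set f : ℝ → ℝ := fun τ => (z τ i - z τ j) ^ 2 with hf
  -- derivative of f at any τ ≥ 0
  have hderiv : ∀ τ, 0 ≤ τ → HasDerivAt f
      (2 * (z τ i - z τ j) *
        ((-(kappa n pbar (z τ) (Pr τ) i) / pbar i) -
         (-(kappa n pbar (z τ) (Pr τ) j) / pbar j))) τ := by
    intro τ hτ
    have hi := hcl τ hτ i
    have hj := hcl τ hτ j
    have hsub := hi.sub hj
    have := hsub.pow 2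
    simpa [hf, mul_comm, mul_assoc, mul_left_comm, Pi.pow_def, Pi.sub_def] using this
  have hderiv_nonpos : ∀ τ, 0 ≤ τ →
      2 * (z τ i - z τ j) *
        ((-(kappa n pbar (z τ) (Pr τ) i) / pbar i) -
         (-(kappa n pbar (z τ) (Pr τ) j) / pbar j)) ≤ 0 := by
    intro τ hτ
    have hri : -(kappa n pbar (z τ) (Pr τ) i) / pbar i =
        -(kappa n pbar (z τ) (Pr τ) i / pbar i) := by ring
    have hrj : -(kappa n pbar (z τ) (Pr τ) j) / pbar j =
        -(kappa n pbar (z τ) (Pr τ) j / pbar j) := by ring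
    rw [hri, hrj]
    rcases lt_trichotomy (z τ i) (z τ j) with h | h | h
    · have hr := kappa_rate_mono n pbar (z τ) (Pr τ) j i hp (hz τ hτ) h
      nlinarith
    · rw [kappa_rate_eq_of_eq n pbar (z τ) (Pr τ) i j (hp i) (hp j) h]
      simp [h]
    · have hr := kappa_rate_mono n pbar (z τ) (Pr τ) i j hp (hz τ hτ) h
      nlinarith
  -- f is antitone on [s, t]
  have hanti : AntitoneOn f (Set.Icc s t) := by
    apply antitoneOn_of_deriv_nonpos (convex_Icc s t)
    · intro τ hτ
      exact ((hderiv τ (hs.trans hτ.1)).continuousAt).continuousWithinAt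
    · intro τ hτ
      rw [interior_Icc] at hτ
      exact ((hderiv τ (hs.trans hτ.1.le)).differentiableAt).differentiableWithinAt
    · intro τ hτ
      rw [interior_Icc] at hτ
      rw [(hderiv τ (hs.trans hτ.1.le)).deriv]
      exact hderiv_nonpos τ (hs.trans hτ.1.le)
  have hft : f t ≤ f s := hanti (Set.left_mem_Icc.mpr hst) (Set.right_mem_Icc.mpr hst) hst
  have hfs : f s = 0 := by simp [hf, heq]
  have hft0 : f t = 0 := le_antisymm (hfs ▸ hft) (by positivity)
  have : z t i - z t j = 0 := by
    have := pow_eq_zero_iff (n := 2) (by norm_num) |>.mp hft0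
    exact this
  linarith

/-- the number of distinct state values is non-increasing along closed-loop
trajectories; consequently the trajectory visits at most `n` partition-induced regions
(the count takes at most `n` distinct values). -/
theorem closedLoop_distinct_values_nonincreasing (n : ℕ) (hn : 0 < n)
    (pbar : Fin n → ℝ) (Pr : ℝ → ℝ) (z : ℝ → Fin n → ℝ)
    (hp : ∀ i, 0 < pbar i) (hz : ∀ t, 0 ≤ t → ∀ i, 0 ≤ z t i)
    (hcl : ClosedLoop n pbar Pr z) :
    (∀ s t : ℝ, 0 ≤ s → s ≤ t →
      (Finset.image (z t) Finset.univ).card ≤ (Finset.image (z s) Finset.univ).card) ∧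
    ({k : ℕ | ∃ t, 0 ≤ t ∧ (Finset.image (z t) Finset.univ).card = k}.Finite ∧
      {k : ℕ | ∃ t, 0 ≤ t ∧ (Finset.image (z t) Finset.univ).card = k}.ncard ≤ n) := by
  classical
  have hmono : ∀ s t : ℝ, 0 ≤ s → s ≤ t →
      (Finset.image (z t) Finset.univ).card ≤ (Finset.image (z s) Finset.univ).card := by
    intro s t hs hst
    set g : ℝ → ℝ := fun v => if h : ∃ i : Fin n, z s i = v then z t h.choose else 0 with hg
    apply Finset.card_le_card_of_surjOn g
    intro v hv
    simp only [Finset.coe_image, Finset.coe_univ, Set.image_univ, Set.mem_range] at hv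
    obtain ⟨i, hi⟩ := hv
    refine ⟨z s i, ?_, ?_⟩
    · exact Finset.mem_coe.mpr (Finset.mem_image_of_mem (z s) (Finset.mem_univ i))
    have hex : ∃ k : Fin n, z s k = z s i := ⟨i, rfl⟩
    rw [hg]
    simp only [dif_pos hex]
    rw [← hi]
    exact closedLoop_merge n pbar Pr z hp hz hcl _ i s t hs hst hex.choose_spec
  refine ⟨hmono, ?_, ?_⟩
  · apply Set.Finite.subset (Set.finite_Icc 1 n)
    rintro k ⟨t, ht, hk⟩
    constructor
    · rw [← hk]
      have : (Finset.image (z t) Finset.univ).Nonempty :=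
        Finset.Nonempty.image (Finset.univ_nonempty_iff.mpr ⟨⟨0, hn⟩⟩) _
      exact Finset.card_pos.mpr this
    · rw [← hk]
      calc (Finset.image (z t) Finset.univ).card ≤ (Finset.univ : Finset (Fin n)).card :=
          Finset.card_image_le
        _ = n := Finset.card_univ.trans (Fintype.card_fin n)
  · have hsub : {k : ℕ | ∃ t, 0 ≤ t ∧ (Finset.image (z t) Finset.univ).card = k} ⊆
        Set.Icc 1 n := by
      rintro k ⟨t, ht, hk⟩
      constructor
      · rw [← hk]
        have : (Finset.image (z t) Finset.univ).Nonempty :=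
          Finset.Nonempty.image (Finset.univ_nonempty_iff.mpr ⟨⟨0, hn⟩⟩) _
        exact Finset.card_pos.mpr this
      · rw [← hk]
        calc (Finset.image (z t) Finset.univ).card ≤ (Finset.univ : Finset (Fin n)).card :=
            Finset.card_image_le
          _ = n := Finset.card_univ.trans (Fintype.card_fin n)
    calc {k : ℕ | ∃ t, 0 ≤ t ∧ (Finset.image (z t) Finset.univ).card = k}.ncard
        ≤ (Set.Icc 1 n).ncard := Set.ncard_le_ncard hsub (Set.finite_Icc 1 n)
      _ = (Finset.Icc 1 n).card := by rw [← Set.ncard_coe_finset, Finset.coe_Icc]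
      _ = n := by rw [Nat.card_Icc]; omega
end

section
/- A unique absolutely continuous solution of the closed-loop system ẋ(t) = −P⁻¹ κ(x(t), P^r(t)) exists for every initial condition x(0) ∈ [0,∞)^n and every piecewise-continuous reference P^r(·) ≥ 0, obtained by concatenating solutions across the finitely many regions of the equal-value partition of the state space. -/
open Set

namespace CLAux

noncomputable def clamp (y : ℝ) : ℝ := max 0 (min 1 y)

lemma clamp_nonneg (y : ℝ) : 0 ≤ clamp y := le_max_left _ _
lemma clamp_le_one (y : ℝ) : clamp y ≤ 1 := max_le zero_le_one (min_le_left _ _)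
lemma clamp_of_nonpos {y : ℝ} (h : y ≤ 0) : clamp y = 0 :=
  max_eq_left ((min_le_right _ _).trans h)
lemma clamp_of_one_le {y : ℝ} (h : 1 ≤ y) : clamp y = 1 := by
  rw [clamp, min_eq_left h, max_eq_right zero_le_one]
lemma clamp_continuous : Continuous clamp :=
  continuous_const.max (continuous_const.min continuous_id)

variable (n : ℕ) (pbar : Fin n → ℝ)

noncomputable def rate (x : Fin n → ℝ) (P : ℝ) (i : Fin n) : ℝ :=
  if 0 < x i then
    clamp ((P - ∑ j ∈ Finset.univ.filter (fun j => x i < x j), pbar j) /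
      (∑ j ∈ Finset.univ.filter (fun j => x j = x i), pbar j))
  else 0

lemma rate_nonneg (x : Fin n → ℝ) (P : ℝ) (i : Fin n) : 0 ≤ rate n pbar x P i := by
  unfold rate; split_ifs
  · exact clamp_nonneg _
  · exact le_refl _

lemma rate_le_one (x : Fin n → ℝ) (P : ℝ) (i : Fin n) : rate n pbar x P i ≤ 1 := by
  unfold rate; split_ifs
  · exact clamp_le_one _
  · exact zero_le_one

lemma kappa_div (hp : ∀ i, 0 < pbar i) (x : Fin n → ℝ) (P : ℝ) (i : Fin n) :
    -(kappa n pbar x P i) / pbar i = -(rate n pbar x P i) := by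
  unfold kappa rate clamp
  split_ifs
  · rw [neg_div, mul_comm, mul_div_assoc, div_self (ne_of_gt (hp i)), mul_one]
  · simp

lemma rate_congr {x : Fin n → ℝ} {i j : Fin n} (h : x i = x j) (P : ℝ) :
    rate n pbar x P i = rate n pbar x P j := by
  unfold rate; rw [h]

lemma rate_mono (hp : ∀ i, 0 < pbar i) (x : Fin n → ℝ) (P : ℝ) {i j : Fin n}
    (hij : x j ≤ x i) : rate n pbar x P j ≤ rate n pbar x P i := by
  rcases eq_or_lt_of_le hij with heq | hlt
  · rw [rate_congr n pbar heq.symm]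
  · by_cases hj : 0 < x j
    · have hi : 0 < x i := hj.trans hlt
      rw [rate, rate, if_pos hi, if_pos hj]
      set Ai := ∑ m ∈ Finset.univ.filter (fun m => x i < x m), pbar m with hAi
      set Bi := ∑ m ∈ Finset.univ.filter (fun m => x m = x i), pbar m with hBi
      set Aj := ∑ m ∈ Finset.univ.filter (fun m => x j < x m), pbar m with hAj
      set Bj := ∑ m ∈ Finset.univ.filter (fun m => x m = x j), pbar m with hBj
      have hBipos : 0 < Bi :=
        Finset.sum_pos (fun m _ => hp m) ⟨i, Finset.mem_filter.2 ⟨Finset.mem_univ _, rfl⟩⟩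
      have hBjpos : 0 < Bj :=
        Finset.sum_pos (fun m _ => hp m) ⟨j, Finset.mem_filter.2 ⟨Finset.mem_univ _, rfl⟩⟩
      have hsub : Ai + Bi ≤ Aj := by
        have hdisj : Disjoint (Finset.univ.filter (fun m => x i < x m))
            (Finset.univ.filter (fun m => x m = x i)) := by
          rw [Finset.disjoint_filter]
          intro m _ hm hm'
          rw [hm'] at hm
          exact lt_irrefl _ hm
        rw [hAi, hBi, ← Finset.sum_union hdisj]
        apply Finset.sum_le_sum_of_subset_of_nonneg
        · intro m hm
          rcases Finset.mem_union.1 hm with h1 | h1 <;>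
            rw [Finset.mem_filter] at h1 ⊢ <;> refine ⟨h1.1, ?_⟩
          · exact hlt.trans h1.2
          · rw [h1.2]; exact hlt
        · exact fun m _ _ => (hp m).le
      by_cases hP : P < Ai + Bi
      · have : (P - Aj) / Bj ≤ 0 :=
          div_nonpos_of_nonpos_of_nonneg (by linarith) hBjpos.le
        rw [clamp_of_nonpos this]
        exact clamp_nonneg _
      · have : 1 ≤ (P - Ai) / Bi := by
          rw [le_div_iff₀ hBipos]; linarith [not_lt.1 hP]
        rw [clamp_of_one_le this]
        exact clamp_le_one _
    · rw [rate, if_neg hj]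
      exact rate_nonneg n pbar x P i

def Pattern (x y : Fin n → ℝ) : Prop :=
  (∀ i j, x i < x j ↔ y i < y j) ∧ (∀ i j, x i = x j ↔ y i = y j) ∧ (∀ i, 0 < x i ↔ 0 < y i)

lemma rate_pattern {x y : Fin n → ℝ} (h : Pattern n x y) (P : ℝ) (i : Fin n) :
    rate n pbar y P i = rate n pbar x P i := by
  obtain ⟨hlt, heq, hpos⟩ := h
  have h1 : Finset.univ.filter (fun j => y i < y j) = Finset.univ.filter (fun j => x i < x j) :=
    Finset.filter_congr fun j _ => by simp [hlt i j]
  have h2 : Finset.univ.filter (fun j => y j = y i) = Finset.univ.filter (fun j => x j = x i) :=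
    Finset.filter_congr fun j _ => by simp [heq j i]
  unfold rate
  by_cases hxi : 0 < x i
  · rw [if_pos ((hpos i).1 hxi), if_pos hxi, h1, h2]
  · rw [if_neg (fun h => hxi ((hpos i).2 h)), if_neg hxi]

lemma pattern_of {x y : Fin n → ℝ} (hx : ∀ i, 0 ≤ x i)
    (heq : ∀ i j, x i = x j → y i = y j) (hlt : ∀ i j, x i < x j → y i < y j)
    (hzero : ∀ i, x i = 0 → y i = 0) (hpos : ∀ i, 0 < x i → 0 < y i) : Pattern n x y := by
  refine ⟨fun i j => ⟨hlt i j, fun h => ?_⟩, fun i j => ⟨heq i j, fun h => ?_⟩,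
    fun i => ⟨hpos i, fun h => ?_⟩⟩
  · rcases lt_trichotomy (x i) (x j) with h1 | h1 | h1
    · exact h1
    · exact absurd (heq i j h1) (ne_of_lt h)
    · exact absurd (hlt j i h1) (asymm h)
  · rcases lt_trichotomy (x i) (x j) with h1 | h1 | h1
    · exact absurd (hlt i j h1) (by rw [h]; exact lt_irrefl _)
    · exact h1
    · exact absurd (hlt j i h1) (by rw [h]; exact lt_irrefl _)
  · by_contra h1
    have : x i = 0 := le_antisymm (not_lt.1 h1) (hx i)
    rw [hzero i this] at h
    exact lt_irrefl _ h


section Integration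
open MeasureTheory intervalIntegral

def Adm (Pr : ℝ → ℝ) : Prop :=
  (∀ t, ContinuousWithinAt Pr (Set.Ici t) t) ∧ ∃ D : Set ℝ, D.Finite ∧ ContinuousOn Pr Dᶜ

lemma adm_meas {Pr : ℝ → ℝ} (h : Adm Pr) : AEMeasurable Pr (volume : MeasureTheory.Measure ℝ) := by
  obtain ⟨-, D, hD, hcont⟩ := h
  have hDm : MeasurableSet (Dᶜ) := hD.measurableSet.compl
  have h1 : AEMeasurable Pr ((volume : MeasureTheory.Measure ℝ).restrict Dᶜ) :=
    hcont.aemeasurable hDm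
  have h2 : (volume : MeasureTheory.Measure ℝ).restrict Dᶜ = volume := by
    apply MeasureTheory.Measure.restrict_eq_self_of_ae_mem
    rw [MeasureTheory.ae_iff]
    simpa using hD.measure_zero volume
  rwa [h2] at h1

variable (n : ℕ) (pbar : Fin n → ℝ) (x0 : Fin n → ℝ) (Pr : ℝ → ℝ)

noncomputable def rho (i : Fin n) : ℝ → ℝ := fun t => rate n pbar x0 (Pr t) i

lemma rho_meas (hA : Adm Pr) (i : Fin n) :
    AEStronglyMeasurable (rho n pbar x0 Pr i) (volume : MeasureTheory.Measure ℝ) := by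
  unfold rho rate
  by_cases h : 0 < x0 i
  · simp only [if_pos h]
    exact (clamp_continuous.measurable.comp_aemeasurable
      ((((adm_meas hA).sub aemeasurable_const)).div aemeasurable_const)).aestronglyMeasurable
  · simp only [if_neg h]
    exact aestronglyMeasurable_const

lemma rho_intInt (hA : Adm Pr) (i : Fin n) (a b : ℝ) :
    IntervalIntegrable (rho n pbar x0 Pr i) volume a b := by
  apply IntervalIntegrable.mono_fun (_root_.intervalIntegrable_const (c := (1:ℝ)))
    ((rho_meas n pbar x0 Pr hA i).restrict)
  apply MeasureTheory.ae_of_all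
  intro t
  simp only [rho, Real.norm_eq_abs, abs_one]
  rw [abs_of_nonneg (rate_nonneg n pbar x0 (Pr t) i)]
  exact rate_le_one n pbar x0 (Pr t) i

lemma rho_rightCont (hA : Adm Pr) (i : Fin n) (t : ℝ) :
    ContinuousWithinAt (rho n pbar x0 Pr i) (Set.Ici t) t := by
  unfold rho rate
  by_cases h : 0 < x0 i
  · simp only [if_pos h]
    exact clamp_continuous.continuousAt.comp_continuousWithinAt
      (((hA.1 t).sub continuousWithinAt_const).div_const _)
  · simp only [if_neg h]
    exact continuousWithinAt_const

noncomputable def Fint (i : Fin n) : ℝ → ℝ := fun t => ∫ s in (0:ℝ)..t, rho n pbar x0 Pr i s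

lemma Fint_zero (i : Fin n) : Fint n pbar x0 Pr i 0 = 0 := integral_same

lemma Fint_cont (hA : Adm Pr) (i : Fin n) : Continuous (Fint n pbar x0 Pr i) :=
  continuous_primitive (fun a b => rho_intInt n pbar x0 Pr hA i a b) 0

lemma Fint_deriv (hA : Adm Pr) (i : Fin n) (t : ℝ) :
    HasDerivWithinAt (Fint n pbar x0 Pr i) (rho n pbar x0 Pr i t) (Set.Ici t) t := by
  apply integral_hasDerivWithinAt_right (rho_intInt n pbar x0 Pr hA i 0 t)
    ((rho_meas n pbar x0 Pr hA i).stronglyMeasurableAtFilter)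
  exact (rho_rightCont n pbar x0 Pr hA i t).mono Set.Ioi_subset_Ici_self

lemma Fint_add (hA : Adm Pr) (i : Fin n) (a b : ℝ) :
    Fint n pbar x0 Pr i b - Fint n pbar x0 Pr i a = ∫ s in a..b, rho n pbar x0 Pr i s := by
  unfold Fint
  rw [← intervalIntegral.integral_add_adjacent_intervals
    (rho_intInt n pbar x0 Pr hA i 0 a) (rho_intInt n pbar x0 Pr hA i a b)]
  ring

lemma Fint_sub_mono (hA : Adm Pr) {i j : Fin n} (hp : ∀ k, 0 < pbar k)
    (hij : x0 j ≤ x0 i) {a b : ℝ} (hab : a ≤ b) :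
    Fint n pbar x0 Pr j b - Fint n pbar x0 Pr j a ≤
      Fint n pbar x0 Pr i b - Fint n pbar x0 Pr i a := by
  rw [Fint_add n pbar x0 Pr hA, Fint_add n pbar x0 Pr hA]
  apply intervalIntegral.integral_mono_on hab (rho_intInt n pbar x0 Pr hA j a b)
    (rho_intInt n pbar x0 Pr hA i a b)
  intro s _
  exact rate_mono n pbar hp x0 (Pr s) hij

lemma Fint_nonneg (hA : Adm Pr) (i : Fin n) {a b : ℝ} (hab : a ≤ b) :
    Fint n pbar x0 Pr i a ≤ Fint n pbar x0 Pr i b := by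
  have h := Fint_add n pbar x0 Pr hA i a b
  have h2 : 0 ≤ ∫ s in a..b, rho n pbar x0 Pr i s :=
    intervalIntegral.integral_nonneg hab (fun s _ => rate_nonneg n pbar x0 (Pr s) i)
  linarith

noncomputable def zeta : ℝ → Fin n → ℝ := fun t i => x0 i - Fint n pbar x0 Pr i t

lemma zeta_zero : zeta n pbar x0 Pr 0 = x0 := by
  funext i; simp [zeta, Fint_zero]

lemma zeta_eq_of_eq {i j : Fin n} (h : x0 i = x0 j) (t : ℝ) :
    zeta n pbar x0 Pr t i = zeta n pbar x0 Pr t j := by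
  have hr : rho n pbar x0 Pr i = rho n pbar x0 Pr j := by
    funext s; exact rate_congr n pbar h (Pr s)
  simp only [zeta, Fint, hr, h]

lemma zeta_zero_coord {i : Fin n} (h : x0 i = 0) (t : ℝ) : zeta n pbar x0 Pr t i = 0 := by
  have hr : rho n pbar x0 Pr i = fun _ => 0 := by
    funext s; simp [rho, rate, h]
  simp [zeta, Fint, hr, h]

end Integration


section SolLemmas
open Filter

variable (n : ℕ) (pbar : Fin n → ℝ) (x0 : Fin n → ℝ) (Pr : ℝ → ℝ)

def Sol (z : ℝ → Fin n → ℝ) : Prop :=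
  z 0 = x0 ∧ (∀ i, ContinuousOn (fun s => z s i) (Set.Ici 0)) ∧
  ∀ t, 0 ≤ t → ∀ i, HasDerivWithinAt (fun s => z s i)
    (-(rate n pbar (z t) (Pr t) i)) (Set.Ici t) t

def EvGen (w : ℝ → Fin n → ℝ) : Set ℝ :=
  {t | 0 ≤ t ∧ ((∃ i j, x0 j < x0 i ∧ w t i ≤ w t j) ∨ (∃ i, 0 < x0 i ∧ w t i ≤ 0))}

lemma evgen_congr {w v : ℝ → Fin n → ℝ} {t : ℝ} (h : w t = v t) :
    t ∈ EvGen n x0 w ↔ t ∈ EvGen n x0 v := by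
  simp only [EvGen, Set.mem_setOf_eq, h]

lemma evgen_closed {w : ℝ → Fin n → ℝ}
    (hw : ∀ i, ContinuousOn (fun s => w s i) (Set.Ici 0)) : IsClosed (EvGen n x0 w) := by
  have hrw : EvGen n x0 w =
      (⋃ i, ⋃ j, {t | (0 ≤ t ∧ x0 j < x0 i) ∧ w t i ≤ w t j}) ∪
        (⋃ i, {t | (0 ≤ t ∧ 0 < x0 i) ∧ w t i ≤ 0}) := by
    ext t
    constructor
    · rintro ⟨ht, h | h⟩
      · obtain ⟨i, j, h1, h2⟩ := h
        exact Or.inl (Set.mem_iUnion.2 ⟨i, Set.mem_iUnion.2 ⟨j, ⟨⟨ht, h1⟩, h2⟩⟩⟩)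
      · obtain ⟨i, h1, h2⟩ := h
        exact Or.inr (Set.mem_iUnion.2 ⟨i, ⟨⟨ht, h1⟩, h2⟩⟩)
    · rintro (h | h)
      · obtain ⟨S, ⟨i, rfl⟩, hS⟩ := h
        obtain ⟨S', ⟨j, rfl⟩, h1, h2⟩ := hS
        exact ⟨h1.1, Or.inl ⟨i, j, h1.2, h2⟩⟩
      · obtain ⟨S, ⟨i, rfl⟩, h1, h2⟩ := h
        exact ⟨h1.1, Or.inr ⟨i, h1.2, h2⟩⟩
  rw [hrw]
  apply IsClosed.union
  · apply isClosed_iUnion_of_finite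
    intro i
    apply isClosed_iUnion_of_finite
    intro j
    by_cases hc : x0 j < x0 i
    · have : {t | (0 ≤ t ∧ x0 j < x0 i) ∧ w t i ≤ w t j} =
          Set.Ici 0 ∩ (fun t => w t i - w t j) ⁻¹' Set.Iic 0 := by
        ext t
        simp [hc, sub_nonpos]
      rw [this]
      exact ((hw i).sub (hw j)).preimage_isClosed_of_isClosed isClosed_Ici isClosed_Iic
    · have : {t | (0 ≤ t ∧ x0 j < x0 i) ∧ w t i ≤ w t j} = ∅ := by
        ext t; simp [hc]
      rw [this]; exact isClosed_empty
  · apply isClosed_iUnion_of_finite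
    intro i
    by_cases hc : 0 < x0 i
    · have : {t | (0 ≤ t ∧ 0 < x0 i) ∧ w t i ≤ 0} =
          Set.Ici 0 ∩ (fun t => w t i) ⁻¹' Set.Iic 0 := by
        ext t; simp [hc]
      rw [this]
      exact (hw i).preimage_isClosed_of_isClosed isClosed_Ici isClosed_Iic
    · have : {t | (0 ≤ t ∧ 0 < x0 i) ∧ w t i ≤ 0} = ∅ := by
        ext t; simp [hc]
      rw [this]; exact isClosed_empty

lemma evgen_zero_not_mem (hx0 : ∀ i, 0 ≤ x0 i) {w : ℝ → Fin n → ℝ} (hw0 : w 0 = x0) :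
    (0:ℝ) ∉ EvGen n x0 w := by
  rintro ⟨-, h | h⟩
  · obtain ⟨i, j, h1, h2⟩ := h
    rw [hw0] at h2
    exact absurd h2 (not_le.mpr h1)
  · obtain ⟨i, h1, h2⟩ := h
    rw [hw0] at h2
    exact absurd h2 (not_le.mpr h1)

variable {n pbar x0 Pr}

lemma sol_antitone {z : ℝ → Fin n → ℝ} (hz : Sol n pbar x0 Pr z) {i : Fin n} {a b : ℝ}
    (ha : 0 ≤ a) (hab : a ≤ b) : z b i ≤ z a i := by
  obtain ⟨hz0, hcont, hderiv⟩ := hz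
  have key := image_le_of_deriv_right_le_deriv_boundary (f := fun s => z s i)
    (f' := fun s => -(rate n pbar (z s) (Pr s) i)) (a := a) (b := b)
    ((hcont i).mono (fun t ht => ha.trans ht.1))
    (fun s hs => hderiv s (ha.trans hs.1) i)
    (B := fun _ => z a i) (B' := fun _ => 0) le_rfl continuousOn_const
    (fun s _ => hasDerivWithinAt_const _ _ _)
    (fun s _ => neg_nonpos.mpr (rate_nonneg n pbar (z s) (Pr s) i))
  exact key ⟨hab, le_rfl⟩

lemma sol_nonneg {z : ℝ → Fin n → ℝ} (hz : Sol n pbar x0 Pr z) (hx0 : ∀ i, 0 ≤ x0 i) :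
    ∀ t, 0 ≤ t → ∀ i, 0 ≤ z t i := by
  obtain ⟨hz0, hcont, hderiv⟩ := hz
  by_contra hcon
  push_neg at hcon
  obtain ⟨T, hT0, i, hTneg⟩ := hcon
  set A := Set.Icc 0 T ∩ (fun s => z s i) ⁻¹' Set.Ici 0 with hA
  have hAclosed : IsClosed A :=
    ((hcont i).mono (fun s hs => hs.1)).preimage_isClosed_of_isClosed isClosed_Icc isClosed_Ici
  have h0A : (0:ℝ) ∈ A := by
    refine ⟨⟨le_rfl, hT0⟩, ?_⟩
    show 0 ≤ z 0 i
    rw [hz0]; exact hx0 i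
  have hAbdd : BddAbove A := ⟨T, fun s hs => hs.1.2⟩
  set m := sSup A with hm
  have hmA : m ∈ A := hAclosed.csSup_mem ⟨0, h0A⟩ hAbdd
  have hm0 : 0 ≤ m := hmA.1.1
  have hmT : m ≤ T := hmA.1.2
  have hmnegafter : ∀ s, m < s → s ≤ T → z s i < 0 := by
    intro s hms hsT
    by_contra hc
    exact absurd (le_csSup hAbdd ⟨⟨hm0.trans hms.le, hsT⟩, not_lt.1 hc⟩) (not_le.mpr hms)
  have hmltT : m < T := by
    rcases lt_or_eq_of_le hmT with h | h
    · exact h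
    · exfalso; rw [h] at hmA; exact absurd hmA.2 (not_le.mpr hTneg)
  have hzm : z m i ≤ 0 := by
    have htend : Tendsto (fun s => z s i) (nhdsWithin m (Set.Ioi m)) (nhds (z m i)) :=
      (((hcont i) m hm0).mono (fun s hs => hm0.trans (le_of_lt hs))).tendsto
    apply le_of_tendsto htend
    filter_upwards [Ioc_mem_nhdsGT_of_mem ⟨le_rfl, hmltT⟩] with s hs
    exact (hmnegafter s hs.1 hs.2).le
  have hzm0 : z m i = 0 := le_antisymm hzm hmA.2
  have hconst := constant_of_has_deriv_right_zero (f := fun s => z s i) (a := m) (b := T)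
    ((hcont i).mono (fun s hs => hm0.trans hs.1)) ?_ T ⟨hmT, le_rfl⟩
  · rw [hzm0] at hconst
    exact absurd hconst (ne_of_lt hTneg)
  · intro s hs
    have h := hderiv s (hm0.trans hs.1) i
    have hr : rate n pbar (z s) (Pr s) i = 0 := by
      rw [rate, if_neg]
      rcases lt_or_eq_of_le hs.1 with h1 | h1
      · exact not_lt.mpr (hmnegafter s h1 hs.2.le).le
      · rw [← h1, hzm0]; exact lt_irrefl 0
    rw [hr, neg_zero] at h
    exact h

lemma sol_eq_persist (hp : ∀ k, 0 < pbar k) {z : ℝ → Fin n → ℝ} (hz : Sol n pbar x0 Pr z)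
    {i j : Fin n} {T : ℝ} (hT : 0 ≤ T) (h : z T i = z T j) :
    ∀ t, T ≤ t → z t i = z t j := by
  intro t ht
  obtain ⟨hz0, hcont, hderiv⟩ := hz
  have key := image_le_of_deriv_right_le_deriv_boundary
    (f := fun s => (z s i - z s j)^2)
    (f' := fun s => 2 * (z s i - z s j) *
      (rate n pbar (z s) (Pr s) j - rate n pbar (z s) (Pr s) i))
    (a := T) (b := t)
    ((((hcont i).mono (fun r hr => hT.trans hr.1)).sub
      ((hcont j).mono (fun r hr => hT.trans hr.1))).pow 2)
    ?_ (B := fun _ => 0) (B' := fun _ => 0) (by simp [h])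
    continuousOn_const (fun s _ => hasDerivWithinAt_const _ _ _) ?_
  · have h2 : (z t i - z t j)^2 ≤ 0 := key ⟨ht, le_rfl⟩
    have h3 : (z t i - z t j)^2 = 0 := le_antisymm h2 (sq_nonneg _)
    have h4 := (pow_eq_zero_iff two_ne_zero).mp h3
    linarith
  · intro s hs
    have hd := ((hderiv s (hT.trans hs.1) i).sub (hderiv s (hT.trans hs.1) j)).pow 2
    convert hd using 1
    · rfl
    · rfl
    · rfl
    rw [show (2:ℕ) - 1 = 1 from rfl, pow_one, Pi.sub_apply]
    push_cast
    ring
  · intro s hs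
    rcases lt_trichotomy (z s i) (z s j) with h1 | h1 | h1
    · have := rate_mono n pbar hp (z s) (Pr s) h1.le
      nlinarith
    · rw [h1, sub_self]; simp
    · have := rate_mono n pbar hp (z s) (Pr s) h1.le
      nlinarith

lemma sol_order (hp : ∀ k, 0 < pbar k) {z : ℝ → Fin n → ℝ} (hz : Sol n pbar x0 Pr z)
    {i j : Fin n} (hij : x0 j ≤ x0 i) : ∀ t, 0 ≤ t → z t j ≤ z t i := by
  intro t ht
  by_contra hc
  push_neg at hc
  have hw0 : 0 ≤ z 0 i - z 0 j := by rw [hz.1]; linarith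
  have hcont2 : ContinuousOn (fun s => z s i - z s j) (Set.Icc 0 t) :=
    ((hz.2.1 i).sub (hz.2.1 j)).mono (fun s hs => hs.1)
  have hmem : (0:ℝ) ∈ Set.Icc (z t i - z t j) (z 0 i - z 0 j) := ⟨by linarith, hw0⟩
  obtain ⟨s, hs, hs0⟩ := intermediate_value_Icc' ht hcont2 hmem
  have heq : z s i = z s j := by dsimp at hs0; linarith
  have := sol_eq_persist hp hz hs.1 heq t hs.2
  linarith

lemma sol_zero_coord {z : ℝ → Fin n → ℝ} (hz : Sol n pbar x0 Pr z) (hx0 : ∀ i, 0 ≤ x0 i)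
    {i : Fin n} (h : x0 i = 0) (t : ℝ) (ht : 0 ≤ t) : z t i = 0 := by
  have h1 : z t i ≤ z 0 i := sol_antitone hz le_rfl ht
  have h2 : z 0 i = 0 := by rw [hz.1, h]
  exact le_antisymm (h2 ▸ h1) (sol_nonneg hz hx0 t ht i)

lemma sol_pattern (hp : ∀ k, 0 < pbar k) {z : ℝ → Fin n → ℝ} (hz : Sol n pbar x0 Pr z)
    (hx0 : ∀ i, 0 ≤ x0 i) {t : ℝ} (ht : 0 ≤ t) (hev : t ∉ EvGen n x0 z) :
    Pattern n x0 (z t) := by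
  simp only [EvGen, Set.mem_setOf_eq, not_and, not_or, not_exists] at hev
  obtain ⟨h1, h2⟩ := hev ht
  apply pattern_of n hx0
  · intro i j hij
    have h0 : z 0 i = z 0 j := by rw [hz.1, hij]
    exact sol_eq_persist hp hz le_rfl h0 t ht
  · intro i j hij
    have := h1 j i hij
    push_neg at this
    exact this
  · intro i hi
    exact sol_zero_coord hz hx0 hi t ht
  · intro i hi
    have := h2 i hi
    push_neg at this
    exact this

lemma sol_follow (hp : ∀ k, 0 < pbar k) (hA : Adm Pr) (hx0 : ∀ i, 0 ≤ x0 i)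
    {z : ℝ → Fin n → ℝ} (hz : Sol n pbar x0 Pr z) {b : ℝ} (hb : 0 ≤ b)
    (hne : ∀ t ∈ Set.Ico 0 b, t ∉ EvGen n x0 z) :
    ∀ t ∈ Set.Icc 0 b, ∀ i, z t i = zeta n pbar x0 Pr t i := by
  intro t ht i
  have hconst := constant_of_has_deriv_right_zero
    (f := fun s => z s i - zeta n pbar x0 Pr s i) (a := 0) (b := b)
    (((hz.2.1 i).mono (fun s hs => hs.1)).sub
      ((continuous_const.sub (Fint_cont n pbar x0 Pr hA i)).continuousOn)) ?_ t ht
  · have h0 : zeta n pbar x0 Pr 0 i = x0 i := by rw [zeta_zero]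
    have h1 : z 0 i = x0 i := by rw [hz.1]
    rw [h0, h1, sub_self] at hconst
    have : zeta n pbar x0 Pr t i = x0 i - Fint n pbar x0 Pr i t := rfl
    linarith [hconst]
  · intro s hs
    have hzder := hz.2.2 s hs.1 i
    have hzeta : HasDerivWithinAt (fun r => zeta n pbar x0 Pr r i)
        (-(rho n pbar x0 Pr i s)) (Set.Ici s) s :=
      (Fint_deriv n pbar x0 Pr hA i s).const_sub (x0 i)
    have hrate : rate n pbar (z s) (Pr s) i = rho n pbar x0 Pr i s :=
      rate_pattern n pbar (sol_pattern hp hz hx0 hs.1 (hne s hs)) (Pr s) i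
    have hd := hzder.sub hzeta
    convert hd using 1
    · rfl
    rw [hrate]
    ring

end SolLemmas


section Counting

variable (n : ℕ)

noncomputable def Nval (x : Fin n → ℝ) : ℕ :=
  ((Finset.univ.image x).filter (fun v => 0 < v)).card

lemma card_lt_aux {S1 S0 : Finset ℝ} (g : ℝ → ℝ) (hmaps : ∀ v ∈ S1, g v ∈ S0)
    (hinj : Set.InjOn g S1) {w : ℝ} (hw : w ∈ S0) (hmiss : ∀ v ∈ S1, g v ≠ w) :
    S1.card < S0.card := by
  have h1 : S1.card ≤ (S0.erase w).card :=
    Finset.card_le_card_of_injOn g (fun v hv => Finset.mem_erase.2 ⟨hmiss v hv, hmaps v hv⟩) hinj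
  have h2 : (S0.erase w).card < S0.card := Finset.card_erase_lt_of_mem hw
  omega

lemma nval_lt {x0 : Fin n → ℝ} (hx0 : ∀ i, 0 ≤ x0 i) (x1 : Fin n → ℝ)
    (heq : ∀ i j, x0 i = x0 j → x1 i = x1 j)
    (hord : ∀ i j, x0 j ≤ x0 i → x1 j ≤ x1 i)
    (hzero : ∀ i, x0 i = 0 → x1 i = 0)
    (hev : (∃ i j, x0 j < x0 i ∧ x1 i ≤ x1 j) ∨ (∃ i, 0 < x0 i ∧ x1 i ≤ 0)) :
    Nval n x1 < Nval n x0 := by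
  classical
  unfold Nval
  set g : ℝ → ℝ := fun v => if h : ∃ i, x1 i = v then x0 h.choose else 0 with hg
  have hgval : ∀ (v : ℝ) (h : ∃ i, x1 i = v), g v = x0 h.choose := fun v h => dif_pos h
  have hmem1 : ∀ v ∈ (Finset.univ.image x1).filter (fun v => 0 < v),
      0 < v ∧ ∃ i, x1 i = v := by
    intro v hv
    rw [Finset.mem_filter, Finset.mem_image] at hv
    obtain ⟨⟨i, -, hi⟩, hpos⟩ := hv
    exact ⟨hpos, i, hi⟩
  have hkey : ∀ v ∈ (Finset.univ.image x1).filter (fun v => 0 < v),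
      ∀ i, g v = x0 i → x1 i = v := by
    intro v hv i hgv
    obtain ⟨hvpos, hex⟩ := hmem1 v hv
    rw [hgval v hex] at hgv
    have h1 := heq _ i hgv
    rw [hex.choose_spec] at h1
    exact h1.symm
  have hmaps : ∀ v ∈ (Finset.univ.image x1).filter (fun v => 0 < v),
      g v ∈ (Finset.univ.image x0).filter (fun v => 0 < v) := by
    intro v hv
    obtain ⟨hvpos, hex⟩ := hmem1 v hv
    rw [hgval v hex]
    refine Finset.mem_filter.2 ⟨Finset.mem_image.2 ⟨hex.choose, Finset.mem_univ _, rfl⟩, ?_⟩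
    by_contra hc
    have h0 : x0 hex.choose = 0 := le_antisymm (not_lt.1 hc) (hx0 _)
    have h1 := hzero _ h0
    rw [hex.choose_spec] at h1
    exact absurd h1 (ne_of_gt hvpos)
  have hinj : Set.InjOn g ((Finset.univ.image x1).filter (fun v => 0 < v) : Finset ℝ) := by
    intro v hv w hw hvw
    obtain ⟨-, hexv⟩ := hmem1 v (Finset.mem_coe.1 hv)
    obtain ⟨-, hexw⟩ := hmem1 w (Finset.mem_coe.1 hw)
    rw [hgval v hexv, hgval w hexw] at hvw
    have h1 := heq _ _ hvw
    rw [hexv.choose_spec, hexw.choose_spec] at h1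
    exact h1
  have main : ∀ k, 0 < x0 k → x1 k ≤ 0 →
      ((Finset.univ.image x1).filter (fun v => 0 < v)).card <
        ((Finset.univ.image x0).filter (fun v => 0 < v)).card := by
    intro k hk hk0
    apply card_lt_aux g hmaps hinj
      (w := x0 k) (Finset.mem_filter.2 ⟨Finset.mem_image.2 ⟨k, Finset.mem_univ _, rfl⟩, hk⟩)
    intro v hv hgv
    have h1 := hkey v hv k hgv
    obtain ⟨hvpos, -⟩ := hmem1 v hv
    rw [h1] at hk0
    linarith
  rcases hev with ⟨i, j, hji, hle⟩ | ⟨i, hi, hle⟩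
  · have heq1 : x1 i = x1 j := le_antisymm hle (hord i j hji.le)
    by_cases hpos1 : 0 < x1 i
    · have hx0j : 0 < x0 j := by
        rcases (hx0 j).lt_or_eq with h | h
        · exact h
        · exfalso
          have h1 := hzero j h.symm
          rw [← heq1] at h1
          rw [h1] at hpos1
          exact lt_irrefl _ hpos1
      have hx0i : 0 < x0 i := hx0j.trans hji
      have hiS0 : x0 i ∈ (Finset.univ.image x0).filter (fun v => 0 < v) :=
        Finset.mem_filter.2 ⟨Finset.mem_image.2 ⟨i, Finset.mem_univ _, rfl⟩, hx0i⟩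
      have hjS0 : x0 j ∈ (Finset.univ.image x0).filter (fun v => 0 < v) :=
        Finset.mem_filter.2 ⟨Finset.mem_image.2 ⟨j, Finset.mem_univ _, rfl⟩, hx0j⟩
      have hv1 : x1 i ∈ (Finset.univ.image x1).filter (fun v => 0 < v) :=
        Finset.mem_filter.2 ⟨Finset.mem_image.2 ⟨i, Finset.mem_univ _, rfl⟩, hpos1⟩
      by_cases hgv : g (x1 i) = x0 i
      · apply card_lt_aux g hmaps hinj hjS0
        intro v hv hc
        have hvi := hkey v hv j hc
        have hveq : v = x1 i := by rw [← hvi, heq1]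
        rw [hveq, hgv] at hc
        exact absurd hc.symm (ne_of_lt hji)
      · apply card_lt_aux g hmaps hinj hiS0
        intro v hv hc
        have hvi := hkey v hv i hc
        rw [← hvi] at hc
        exact hgv hc
    · exact main i (lt_of_le_of_lt (hx0 j) hji) (not_lt.1 hpos1)
  · exact main i hi hle

end Counting


section Tprops
open Filter

variable (n : ℕ) (pbar : Fin n → ℝ) (x0 : Fin n → ℝ) (Pr : ℝ → ℝ)

lemma pattern_of_not_event {w : ℝ → Fin n → ℝ} (hx0 : ∀ i, 0 ≤ x0 i) {t : ℝ} (ht : 0 ≤ t)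
    (heq : ∀ i j, x0 i = x0 j → w t i = w t j) (hzero : ∀ i, x0 i = 0 → w t i = 0)
    (hev : t ∉ EvGen n x0 w) : Pattern n x0 (w t) := by
  simp only [EvGen, Set.mem_setOf_eq, not_and, not_or, not_exists] at hev
  obtain ⟨h1, h2⟩ := hev ht
  apply pattern_of n hx0 heq
  · intro i j hij
    have := h1 j i hij
    push_neg at this
    exact this
  · exact hzero
  · intro i hi
    have := h2 i hi
    push_neg at this
    exact this

lemma adm_shift {Pr : ℝ → ℝ} (hA : Adm Pr) (T : ℝ) : Adm (fun s => Pr (s + T)) := by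
  constructor
  · intro t
    refine ContinuousWithinAt.comp (hA.1 (t + T))
      ((continuous_add_right T).continuousWithinAt) ?_
    intro s hs
    exact add_le_add_left hs T
  · obtain ⟨D, hD, hcont⟩ := hA.2
    refine ⟨(fun s => s - T) '' D, hD.image _, ?_⟩
    intro t ht
    have htT : t + T ∈ Dᶜ := fun hc => ht ⟨t + T, hc, by ring⟩
    refine ContinuousWithinAt.comp (hcont (t + T) htT)
      ((continuous_add_right T).continuousWithinAt) ?_
    intro s hs hc
    exact hs ⟨s + T, hc, by ring⟩

lemma sol_shift {z : ℝ → Fin n → ℝ} (hz : Sol n pbar x0 Pr z) {T : ℝ} (hT : 0 ≤ T) :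
    Sol n pbar (z T) (fun s => Pr (s + T)) (fun t => z (t + T)) := by
  refine ⟨by simp, fun i => ?_, fun t ht i => ?_⟩
  · intro s hs
    refine ContinuousWithinAt.comp (g := fun r => z r i) (f := fun r : ℝ => r + T)
      (t := Set.Ici (0:ℝ)) ((hz.2.1 i) (s + T) (add_nonneg hs hT))
      ((continuous_add_right T).continuousWithinAt) ?_
    intro r hr
    exact add_nonneg hr hT
  · have hd := hz.2.2 (t + T) (add_nonneg ht hT) i
    have hshift : HasDerivWithinAt (fun s : ℝ => s + T) 1 (Set.Ici t) t :=
      ((hasDerivAt_id t).add_const T).hasDerivWithinAt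
    have hcomp := hd.comp t hshift (fun s hs => add_le_add_left hs T)
    simpa [Function.comp_def] using hcomp

lemma zeta_T (hp : ∀ k, 0 < pbar k) (hA : Adm Pr) (hx0 : ∀ i, 0 ≤ x0 i)
    (hne : (EvGen n x0 (zeta n pbar x0 Pr)).Nonempty) :
    0 < sInf (EvGen n x0 (zeta n pbar x0 Pr)) ∧
    sInf (EvGen n x0 (zeta n pbar x0 Pr)) ∈ EvGen n x0 (zeta n pbar x0 Pr) ∧
    (∀ i, 0 ≤ zeta n pbar x0 Pr (sInf (EvGen n x0 (zeta n pbar x0 Pr))) i) ∧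
    (∀ i j, x0 j ≤ x0 i →
      zeta n pbar x0 Pr (sInf (EvGen n x0 (zeta n pbar x0 Pr))) j ≤
        zeta n pbar x0 Pr (sInf (EvGen n x0 (zeta n pbar x0 Pr))) i) ∧
    Nval n (zeta n pbar x0 Pr (sInf (EvGen n x0 (zeta n pbar x0 Pr)))) < Nval n x0 := by
  have hcont : ∀ i, Continuous (fun s => zeta n pbar x0 Pr s i) :=
    fun i => continuous_const.sub (Fint_cont n pbar x0 Pr hA i)
  set E := EvGen n x0 (zeta n pbar x0 Pr) with hE
  have hEclosed : IsClosed E :=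
    evgen_closed n x0 (fun i => (hcont i).continuousOn)
  have hbdd : BddBelow E := ⟨0, fun t ht => ht.1⟩
  set T := sInf E with hTdef
  have hTmem : T ∈ E := hEclosed.csInf_mem hne hbdd
  have hT0 : 0 ≤ T := hTmem.1
  have hTpos : 0 < T := by
    rcases hT0.lt_or_eq with h | h
    · exact h
    · exfalso
      rw [← h] at hTmem
      exact evgen_zero_not_mem n x0 hx0 (zeta_zero n pbar x0 Pr) hTmem
  have hbefore : ∀ t, 0 ≤ t → t < T → t ∉ E :=
    fun t h1 h2 hmem => absurd (csInf_le hbdd hmem) (not_le.2 h2)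
  have hpat : ∀ t, 0 ≤ t → t < T → Pattern n x0 (zeta n pbar x0 Pr t) := by
    intro t h1 h2
    exact pattern_of_not_event n x0 hx0 h1
      (fun i j hij => zeta_eq_of_eq n pbar x0 Pr hij t)
      (fun i hi => zeta_zero_coord n pbar x0 Pr hi t)
      (hbefore t h1 h2)
  have hIoo : Set.Ioo 0 T ∈ nhdsWithin T (Set.Iio T) :=
    Ioo_mem_nhdsLT_of_mem ⟨hTpos, le_rfl⟩
  have hord : ∀ i j, x0 j ≤ x0 i →
      zeta n pbar x0 Pr T j ≤ zeta n pbar x0 Pr T i := by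
    intro i j hij
    rcases hij.lt_or_eq with hlt | heq
    · have htend : Tendsto (fun t => zeta n pbar x0 Pr t i - zeta n pbar x0 Pr t j)
          (nhdsWithin T (Set.Iio T))
          (nhds (zeta n pbar x0 Pr T i - zeta n pbar x0 Pr T j)) :=
        ((hcont i).sub (hcont j)).continuousAt.continuousWithinAt.tendsto
      have hev : ∀ᶠ t in nhdsWithin T (Set.Iio T),
          0 ≤ zeta n pbar x0 Pr t i - zeta n pbar x0 Pr t j := by
        filter_upwards [hIoo] with t ht
        have := ((hpat t ht.1.le ht.2).1 j i).1 hlt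
        linarith
      have := ge_of_tendsto htend hev
      linarith
    · rw [zeta_eq_of_eq n pbar x0 Pr heq T]
  have hnonneg : ∀ i, 0 ≤ zeta n pbar x0 Pr T i := by
    intro i
    rcases (hx0 i).lt_or_eq with hpos | hzero
    · have htend : Tendsto (fun t => zeta n pbar x0 Pr t i) (nhdsWithin T (Set.Iio T))
          (nhds (zeta n pbar x0 Pr T i)) :=
        (hcont i).continuousAt.continuousWithinAt.tendsto
      apply ge_of_tendsto htend
      filter_upwards [hIoo] with t ht
      exact (((hpat t ht.1.le ht.2).2.2 i).1 hpos).le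
    · rw [zeta_zero_coord n pbar x0 Pr hzero.symm T]
  refine ⟨hTpos, hTmem, hnonneg, hord, ?_⟩
  apply nval_lt n hx0 _ (fun i j h => zeta_eq_of_eq n pbar x0 Pr h T)
    hord (fun i hi => zeta_zero_coord n pbar x0 Pr hi T) hTmem.2

end Tprops


section Existence

variable (n : ℕ) (pbar : Fin n → ℝ)

theorem sol_exists (hp : ∀ k, 0 < pbar k) :
    ∀ (N : ℕ) (x0 : Fin n → ℝ), (∀ i, 0 ≤ x0 i) → Nval n x0 ≤ N →
    ∀ Pr : ℝ → ℝ, Adm Pr → ∃ z, Sol n pbar x0 Pr z := by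
  intro N
  induction N with
  | zero =>
    intro x0 hx0 hN Pr hA
    have hzero : ∀ i, x0 i = 0 := by
      intro i
      by_contra hc
      have hpos : 0 < x0 i := (hx0 i).lt_of_ne (Ne.symm hc)
      have hmem : x0 i ∈ (Finset.univ.image x0).filter (fun v => 0 < v) :=
        Finset.mem_filter.2 ⟨Finset.mem_image.2 ⟨i, Finset.mem_univ _, rfl⟩, hpos⟩
      have hcard : 0 < Nval n x0 := Finset.card_pos.2 ⟨x0 i, hmem⟩
      omega
    refine ⟨fun _ => x0, rfl, fun i => continuousOn_const, fun t ht i => ?_⟩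
    have hr : rate n pbar x0 (Pr t) i = 0 := by
      rw [rate, if_neg]
      rw [hzero i]
      exact lt_irrefl 0
    rw [hr, neg_zero]
    exact hasDerivWithinAt_const _ _ _
  | succ N ih =>
    intro x0 hx0 hN Pr hA
    by_cases hne : (EvGen n x0 (zeta n pbar x0 Pr)).Nonempty
    · obtain ⟨hTpos, hTmem, hTnonneg, hTord, hTnval⟩ := zeta_T n pbar x0 Pr hp hA hx0 hne
      set T := sInf (EvGen n x0 (zeta n pbar x0 Pr)) with hTdef
      obtain ⟨znext, hznext⟩ := ih (zeta n pbar x0 Pr T) hTnonneg (by omega)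
        (fun s => Pr (s + T)) (adm_shift hA T)
      set z : ℝ → Fin n → ℝ :=
        fun t => if t ≤ T then zeta n pbar x0 Pr t else znext (t - T) with hzdef
      have hz_left : ∀ t, t ≤ T → z t = zeta n pbar x0 Pr t := fun t ht => if_pos ht
      have hz_right : ∀ t, T ≤ t → z t = znext (t - T) := by
        intro t ht
        rcases ht.lt_or_eq with h | h
        · exact if_neg (not_le.2 h)
        · calc z t = zeta n pbar x0 Pr t := if_pos h.ge
            _ = zeta n pbar x0 Pr T := by rw [h]
            _ = znext 0 := (hznext.1).symm
            _ = znext (t - T) := by rw [h, sub_self]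
      have hzc : ∀ i, Continuous (fun s => zeta n pbar x0 Pr s i) :=
        fun i => continuous_const.sub (Fint_cont n pbar x0 Pr hA i)
      refine ⟨z, ?_, ?_, ?_⟩
      · rw [hz_left 0 hTpos.le, zeta_zero]
      · -- continuity on Ici 0
        intro i t ht
        rcases lt_trichotomy t T with hlt | heqt | hgt
        · apply ContinuousWithinAt.congr_of_eventuallyEq
            ((hzc i).continuousAt.continuousWithinAt)
          · filter_upwards [nhdsWithin_le_nhds (Iio_mem_nhds hlt)] with s hs
            rw [hz_left s hs.le]
          · rw [hz_left t hlt.le]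
        · have htT : t ≤ T := heqt.le
          have hTt : T ≤ t := heqt.ge
          have hleft : ContinuousWithinAt (fun s => z s i) (Set.Iic t) t := by
            apply ContinuousWithinAt.congr ((hzc i).continuousAt.continuousWithinAt)
            · intro s hs
              rw [hz_left s (le_trans hs htT)]
            · rw [hz_left t htT]
          have hright : ContinuousWithinAt (fun s => z s i) (Set.Ioi t) t := by
            have hz0 : ContinuousWithinAt (fun r => znext r i) (Set.Ici 0) (t - T) := by
              rw [heqt, sub_self]
              exact (hznext.2.1 i) 0 Set.self_mem_Ici
            have hcomp : ContinuousWithinAt (fun s => znext (s - T) i) (Set.Ioi t) t := by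
              refine ContinuousWithinAt.comp (g := fun r => znext r i)
                (f := fun s : ℝ => s - T) (t := Set.Ici (0:ℝ)) hz0
                ((continuous_sub_right T).continuousWithinAt) ?_
              intro s hs
              simp only [Set.mem_Ioi] at hs
              simp only [Set.mem_Ici]
              linarith [heqt ▸ hs]
            apply hcomp.congr
            · intro s hs
              rw [hz_right s (le_of_lt (lt_of_le_of_lt hTt hs))]
            · rw [hz_right t hTt]
          have hu := hleft.union hright
          apply hu.mono
          intro s _
          rcases le_or_gt s t with h | h
          · exact Or.inl h
          · exact Or.inr h
        · have hca : ContinuousAt (fun s => z s i) t := by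
            have h1 : ContinuousAt (fun r => znext r i) (t - T) := by
              apply ((hznext.2.1 i) (t - T) (by simp only [Set.mem_Ici]; linarith)).continuousAt
              exact Ici_mem_nhds (by linarith)
            have h2 : ContinuousAt (fun s => znext (s - T) i) t :=
              ContinuousAt.comp (g := fun r => znext r i) (f := fun s : ℝ => s - T)
                h1 ((continuous_sub_right T).continuousAt)
            apply h2.congr
            filter_upwards [Ioi_mem_nhds hgt] with s hs
            rw [hz_right s hs.le]
          exact hca.continuousWithinAt
      · -- derivative
        intro t ht i
        rcases lt_trichotomy t T with hlt | heqt | hgt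
        · have hnotev : t ∉ EvGen n x0 (zeta n pbar x0 Pr) := fun hmem =>
            absurd (csInf_le ⟨0, fun r hr => hr.1⟩ hmem) (not_le.2 hlt)
          have hpat := pattern_of_not_event n x0 hx0 ht
            (fun i j hij => zeta_eq_of_eq n pbar x0 Pr hij t)
            (fun i hi => zeta_zero_coord n pbar x0 Pr hi t) hnotev
          have hz_t : z t = zeta n pbar x0 Pr t := hz_left t hlt.le
          have hrate : rate n pbar (z t) (Pr t) i = rho n pbar x0 Pr i t := by
            rw [hz_t]
            exact rate_pattern n pbar hpat (Pr t) i
          rw [hrate]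
          have hzeta : HasDerivWithinAt (fun s => zeta n pbar x0 Pr s i)
              (-(rho n pbar x0 Pr i t)) (Set.Ici t) t :=
            (Fint_deriv n pbar x0 Pr hA i t).const_sub (x0 i)
          apply hzeta.congr_of_eventuallyEq
          · filter_upwards [nhdsWithin_le_nhds (Iio_mem_nhds hlt)] with s hs
            rw [hz_left s hs.le]
          · rw [hz_t]
        · have hTt : T ≤ t := heqt.ge
          have hd0 := hznext.2.2 0 le_rfl i
          have hd0' : HasDerivWithinAt (fun r => znext r i)
              (-(rate n pbar (znext 0) (Pr (0 + T)) i)) (Set.Ici 0) (t - T) := by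
            rw [heqt, sub_self]
            exact hd0
          have hshift : HasDerivWithinAt (fun s : ℝ => s - T) 1 (Set.Ici t) t :=
            ((hasDerivAt_id t).sub_const T).hasDerivWithinAt
          have hmaps : Set.MapsTo (fun s : ℝ => s - T) (Set.Ici t) (Set.Ici (0:ℝ)) := by
            intro s hs
            simp only [Set.mem_Ici] at hs ⊢
            rw [heqt] at hs
            linarith
          have hcomp := HasDerivWithinAt.comp (x := t) hd0' hshift hmaps
          have hzi : ∀ s ∈ Set.Ici t, z s i = znext (s - T) i := fun s hs => by
            rw [hz_right s (hTt.trans hs)]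
          have hval : -(rate n pbar (z t) (Pr t) i) =
              (-(rate n pbar (znext 0) (Pr (0 + T)) i)) * 1 := by
            rw [mul_one, zero_add, hz_right t hTt, heqt, sub_self]
          rw [hval]
          exact HasDerivWithinAt.congr hcomp hzi (hzi t Set.self_mem_Ici)
        · have hd := hznext.2.2 (t - T) (by linarith) i
          have hshift : HasDerivWithinAt (fun s : ℝ => s - T) 1 (Set.Ici t) t :=
            ((hasDerivAt_id t).sub_const T).hasDerivWithinAt
          have hmaps : Set.MapsTo (fun s : ℝ => s - T) (Set.Ici t) (Set.Ici (t - T)) := by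
            intro s hs
            simp only [Set.mem_Ici] at hs ⊢
            linarith
          have hcomp := HasDerivWithinAt.comp (x := t) hd hshift hmaps
          have heqz : ∀ s ∈ Set.Ici t, z s i = znext (s - T) i := fun s hs => by
            rw [hz_right s (hgt.le.trans hs)]
          have hval : -(rate n pbar (z t) (Pr t) i) =
              (-(rate n pbar (znext (t - T)) (Pr (t - T + T)) i)) * 1 := by
            rw [mul_one, sub_add_cancel, hz_right t hgt.le]
          rw [hval]
          exact HasDerivWithinAt.congr hcomp heqz (heqz t Set.self_mem_Ici)
    · have hEe : ∀ t, t ∉ EvGen n x0 (zeta n pbar x0 Pr) := by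
        intro t ht
        exact hne ⟨t, ht⟩
      refine ⟨zeta n pbar x0 Pr, zeta_zero n pbar x0 Pr, fun i =>
        (continuous_const.sub (Fint_cont n pbar x0 Pr hA i)).continuousOn, fun t ht i => ?_⟩
      have hpat := pattern_of_not_event n x0 hx0 ht
        (fun i j hij => zeta_eq_of_eq n pbar x0 Pr hij t)
        (fun i hi => zeta_zero_coord n pbar x0 Pr hi t) (hEe t)
      have hrate : rate n pbar (zeta n pbar x0 Pr t) (Pr t) i = rho n pbar x0 Pr i t :=
        rate_pattern n pbar hpat (Pr t) i
      rw [hrate]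
      exact (Fint_deriv n pbar x0 Pr hA i t).const_sub (x0 i)

end Existence


section Uniqueness

variable (n : ℕ) (pbar : Fin n → ℝ)

theorem sol_unique (hp : ∀ k, 0 < pbar k) :
    ∀ (N : ℕ) (x0 : Fin n → ℝ), (∀ i, 0 ≤ x0 i) → Nval n x0 ≤ N →
    ∀ Pr : ℝ → ℝ, Adm Pr → ∀ z1 z2, Sol n pbar x0 Pr z1 → Sol n pbar x0 Pr z2 →
    ∀ t, 0 ≤ t → z1 t = z2 t := by
  intro N
  induction N with
  | zero =>
    intro x0 hx0 hN Pr hA z1 z2 h1 h2 t ht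
    have hzero : ∀ i, x0 i = 0 := by
      intro i
      by_contra hc
      have hpos : 0 < x0 i := (hx0 i).lt_of_ne (Ne.symm hc)
      have hmem : x0 i ∈ (Finset.univ.image x0).filter (fun v => 0 < v) :=
        Finset.mem_filter.2 ⟨Finset.mem_image.2 ⟨i, Finset.mem_univ _, rfl⟩, hpos⟩
      have hcard : 0 < Nval n x0 := Finset.card_pos.2 ⟨x0 i, hmem⟩
      omega
    funext i
    rw [sol_zero_coord h1 hx0 (hzero i) t ht, sol_zero_coord h2 hx0 (hzero i) t ht]
  | succ N ih =>
    intro x0 hx0 hN Pr hA z1 z2 h1 h2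
    have key : ∀ z, Sol n pbar x0 Pr z → ∀ t, 0 ≤ t →
        (EvGen n x0 (zeta n pbar x0 Pr) = ∅ ∨ t ≤ sInf (EvGen n x0 (zeta n pbar x0 Pr))) →
        z t = zeta n pbar x0 Pr t := by
      intro z hz t ht hcond
      by_cases hE'ne : (EvGen n x0 z).Nonempty
      · have hE'c : IsClosed (EvGen n x0 z) := evgen_closed n x0 hz.2.1
        have hbdd' : BddBelow (EvGen n x0 z) := ⟨0, fun r hr => hr.1⟩
        have hτmem : sInf (EvGen n x0 z) ∈ EvGen n x0 z := hE'c.csInf_mem hE'ne hbdd'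
        have hτ0 : 0 ≤ sInf (EvGen n x0 z) := hτmem.1
        have hfollow : ∀ s ∈ Set.Icc 0 (sInf (EvGen n x0 z)), ∀ i,
            z s i = zeta n pbar x0 Pr s i :=
          sol_follow hp hA hx0 hz hτ0
            (fun s hs hmem => absurd (csInf_le hbdd' hmem) (not_le.2 hs.2))
        have hτE : sInf (EvGen n x0 z) ∈ EvGen n x0 (zeta n pbar x0 Pr) :=
          (evgen_congr n x0
            (funext fun i => hfollow (sInf (EvGen n x0 z)) ⟨hτ0, le_rfl⟩ i)).mp hτmem
        rcases hcond with hemp | hle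
        · exfalso
          rw [hemp] at hτE
          exact hτE
        · have hbddE : BddBelow (EvGen n x0 (zeta n pbar x0 Pr)) := ⟨0, fun r hr => hr.1⟩
          have hEE' : sInf (EvGen n x0 (zeta n pbar x0 Pr)) ≤ sInf (EvGen n x0 z) :=
            csInf_le hbddE hτE
          exact funext fun i => hfollow t ⟨ht, hle.trans hEE'⟩ i
      · have hnoev : ∀ s, s ∉ EvGen n x0 z := fun s hs => hE'ne ⟨s, hs⟩
        exact funext fun i =>
          sol_follow hp hA hx0 hz ht (fun s _ => hnoev s) t ⟨ht, le_rfl⟩ i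
    by_cases hne : (EvGen n x0 (zeta n pbar x0 Pr)).Nonempty
    · obtain ⟨hTpos, hTmem, hTnonneg, hTord, hTnval⟩ := zeta_T n pbar x0 Pr hp hA hx0 hne
      have h1T : ∀ t, 0 ≤ t → t ≤ sInf (EvGen n x0 (zeta n pbar x0 Pr)) →
          z1 t = zeta n pbar x0 Pr t := fun t a b => key z1 h1 t a (Or.inr b)
      have h2T : ∀ t, 0 ≤ t → t ≤ sInf (EvGen n x0 (zeta n pbar x0 Pr)) →
          z2 t = zeta n pbar x0 Pr t := fun t a b => key z2 h2 t a (Or.inr b)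
      set T := sInf (EvGen n x0 (zeta n pbar x0 Pr)) with hTdef
      have hs1 := sol_shift n pbar x0 Pr h1 hTpos.le
      have hs2 := sol_shift n pbar x0 Pr h2 hTpos.le
      rw [h1T T hTpos.le le_rfl] at hs1
      rw [h2T T hTpos.le le_rfl] at hs2
      have hnext := ih (zeta n pbar x0 Pr T) hTnonneg (by omega)
        (fun s => Pr (s + T)) (adm_shift hA T) _ _ hs1 hs2
      intro t ht
      rcases le_or_gt t T with h | h
      · rw [h1T t ht h, h2T t ht h]
      · have hx := hnext (t - T) (by linarith)
        simpa [sub_add_cancel] using hx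
    · intro t ht
      have hemp := Set.not_nonempty_iff_eq_empty.1 hne
      rw [key z1 h1 t ht (Or.inl hemp), key z2 h2 t ht (Or.inl hemp)]

end Uniqueness

end CLAux

/-- existence and uniqueness (on `[0, ∞)`) of an absolutely continuous
solution of the closed-loop system, for every nonnegative initial condition and every
piecewise-continuous (right-continuous) nonnegative reference. Right derivatives are
used at every time. -/
theorem closedLoop_exists_unique (n : ℕ) (pbar x0 : Fin n → ℝ) (Pr : ℝ → ℝ)
    (hp : ∀ i, 0 < pbar i) (hx0 : ∀ i, 0 ≤ x0 i) (hPr : ∀ t, 0 ≤ Pr t)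
    (hPrRight : ∀ t, ContinuousWithinAt Pr (Set.Ici t) t)
    (hPw : ∃ D : Set ℝ, D.Finite ∧ ContinuousOn Pr Dᶜ) :
    ∃ z : ℝ → Fin n → ℝ,
      (z 0 = x0 ∧ (∀ i, ContinuousOn (fun s => z s i) (Set.Ici (0 : ℝ))) ∧
        (∀ t, 0 ≤ t → ∀ i,
          HasDerivWithinAt (fun s => z s i)
            (-(kappa n pbar (z t) (Pr t) i) / pbar i) (Set.Ici t) t)) ∧
      (∀ z' : ℝ → Fin n → ℝ,
        (z' 0 = x0 ∧ (∀ i, ContinuousOn (fun s => z' s i) (Set.Ici (0 : ℝ))) ∧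
          (∀ t, 0 ≤ t → ∀ i,
            HasDerivWithinAt (fun s => z' s i)
              (-(kappa n pbar (z' t) (Pr t) i) / pbar i) (Set.Ici t) t)) →
        ∀ t, 0 ≤ t → z' t = z t) := by
  have hA : CLAux.Adm Pr := ⟨hPrRight, hPw⟩
  have htrans : ∀ w : ℝ → Fin n → ℝ,
      (w 0 = x0 ∧ (∀ i, ContinuousOn (fun s => w s i) (Set.Ici (0:ℝ))) ∧
        (∀ t, 0 ≤ t → ∀ i, HasDerivWithinAt (fun s => w s i)
          (-(kappa n pbar (w t) (Pr t) i) / pbar i) (Set.Ici t) t)) ↔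
      CLAux.Sol n pbar x0 Pr w := by
    intro w
    unfold CLAux.Sol
    simp only [CLAux.kappa_div n pbar hp]
  obtain ⟨z, hz⟩ := CLAux.sol_exists n pbar hp (CLAux.Nval n x0) x0 hx0 le_rfl Pr hA
  refine ⟨z, (htrans z).mpr hz, ?_⟩
  intro z' hz' t ht
  exact CLAux.sol_unique n pbar hp (CLAux.Nval n x0) x0 hx0 le_rfl Pr hA z' z
    ((htrans z').mp hz') hz t ht
end

section
/- The longest-time-to-go-first policy maximises the instantaneous available power: if z*(·) is the closed-loop trajectory under the policy and z̃(·) is any other trajectory fulfilling the same feasible reference from the same initial state, then P̄^r(z*(t)) ≥ P̄^r(z̃(t)) for all t ≥ 0, where P̄^r(x) = Σ_{i : x_i > 0} p̄_i. -/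
open Set

namespace PolicyAux

open Finset

variable {n : ℕ} {pbar x : Fin n → ℝ} {P : ℝ}

/-- The common fraction of maximum power assigned by the policy to the group of `i`. -/
noncomputable def frac (n : ℕ) (pbar x : Fin n → ℝ) (P : ℝ) (i : Fin n) : ℝ :=
  max 0 (min 1
    ((P - ∑ j ∈ Finset.univ.filter (fun j => x i < x j), pbar j) /
      (∑ j ∈ Finset.univ.filter (fun j => x j = x i), pbar j)))

lemma kappa_eq_frac {i : Fin n} (hi : 0 < x i) :
    kappa n pbar x P i = pbar i * frac n pbar x P i := by
  simp only [kappa, frac, if_pos hi]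

lemma kappa_of_nonpos {i : Fin n} (hi : ¬ 0 < x i) : kappa n pbar x P i = 0 := by
  simp only [kappa, if_neg hi]

lemma frac_nonneg (i : Fin n) : 0 ≤ frac n pbar x P i := le_max_left _ _

lemma frac_le_one (i : Fin n) : frac n pbar x P i ≤ 1 :=
  max_le zero_le_one (min_le_left _ _)

lemma kappa_nonneg (hp : ∀ i, 0 < pbar i) (i : Fin n) : 0 ≤ kappa n pbar x P i := by
  by_cases hi : 0 < x i
  · rw [kappa_eq_frac hi]
    exact mul_nonneg (hp i).le (frac_nonneg i)
  · rw [kappa_of_nonpos hi]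

lemma kappa_le (hp : ∀ i, 0 < pbar i) (i : Fin n) : kappa n pbar x P i ≤ pbar i := by
  by_cases hi : 0 < x i
  · rw [kappa_eq_frac hi]
    calc pbar i * frac n pbar x P i ≤ pbar i * 1 :=
          mul_le_mul_of_nonneg_left (frac_le_one i) (hp i).le
      _ = pbar i := mul_one _
  · rw [kappa_of_nonpos hi]; exact (hp i).le

lemma xpos_of_kappa_pos {i : Fin n} (h : 0 < kappa n pbar x P i) : 0 < x i := by
  by_contra hx
  rw [kappa_of_nonpos hx] at h
  exact lt_irrefl 0 h

lemma frac_congr {i j : Fin n} (hx : x i = x j) : frac n pbar x P i = frac n pbar x P j := by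
  simp only [frac, hx]

lemma denom_pos (hp : ∀ i, 0 < pbar i) (i : Fin n) :
    0 < ∑ j ∈ Finset.univ.filter (fun j => x j = x i), pbar j := by
  have hi : i ∈ Finset.univ.filter (fun j => x j = x i) := by simp
  calc (0:ℝ) < pbar i := hp i
    _ ≤ _ := Finset.single_le_sum (fun j _ => (hp j).le) hi

lemma frac_pos_of_kappa_pos (hp : ∀ i, 0 < pbar i) {i : Fin n}
    (h : 0 < kappa n pbar x P i) : 0 < frac n pbar x P i := by
  have hi : 0 < x i := xpos_of_kappa_pos h
  rw [kappa_eq_frac hi] at h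
  rcases mul_pos_iff.1 h with ⟨_, h2⟩ | ⟨h1, _⟩
  · exact h2
  · exact absurd h1 (not_lt.2 (hp i).le)

lemma numer_pos_of_kappa_pos (hp : ∀ i, 0 < pbar i) {i : Fin n}
    (h : 0 < kappa n pbar x P i) :
    0 < P - ∑ j ∈ Finset.univ.filter (fun j => x i < x j), pbar j := by
  have hf := frac_pos_of_kappa_pos hp h
  set N := P - ∑ j ∈ Finset.univ.filter (fun j => x i < x j), pbar j with hN
  set D := ∑ j ∈ Finset.univ.filter (fun j => x j = x i), pbar j with hD
  have hDpos : 0 < D := denom_pos hp i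
  have hm : 0 < min 1 (N / D) := by
    by_contra hm
    push_neg at hm
    rw [show frac n pbar x P i = max 0 (min 1 (N / D)) from rfl, max_eq_left hm] at hf
    exact lt_irrefl 0 hf
  have hq : 0 < N / D := lt_of_lt_of_le hm (min_le_right _ _)
  have := mul_pos hq hDpos
  rwa [div_mul_cancel₀ _ hDpos.ne'] at this

lemma frac_le_ratio_of_kappa_pos (hp : ∀ i, 0 < pbar i) {i : Fin n}
    (h : 0 < kappa n pbar x P i) :
    frac n pbar x P i *
      (∑ j ∈ Finset.univ.filter (fun j => x j = x i), pbar j) ≤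
      P - ∑ j ∈ Finset.univ.filter (fun j => x i < x j), pbar j := by
  have hf := frac_pos_of_kappa_pos hp h
  set N := P - ∑ j ∈ Finset.univ.filter (fun j => x i < x j), pbar j with hN
  set D := ∑ j ∈ Finset.univ.filter (fun j => x j = x i), pbar j with hD
  have hDpos : 0 < D := denom_pos hp i
  have hm : 0 < min 1 (N / D) := by
    by_contra hm
    push_neg at hm
    rw [show frac n pbar x P i = max 0 (min 1 (N / D)) from rfl, max_eq_left hm] at hf
    exact lt_irrefl 0 hf
  have hE : frac n pbar x P i ≤ N / D := by
    rw [show frac n pbar x P i = max 0 (min 1 (N / D)) from rfl, max_eq_right hm.le]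
    exact min_le_right _ _
  calc frac n pbar x P i * D ≤ (N / D) * D := mul_le_mul_of_nonneg_right hE hDpos.le
    _ = N := div_mul_cancel₀ _ hDpos.ne'

lemma kappa_saturate (hp : ∀ i, 0 < pbar i) {i j : Fin n} (hij : x i < x j)
    (hi : 0 < kappa n pbar x P i) : kappa n pbar x P j = pbar j := by
  have hxi : 0 < x i := xpos_of_kappa_pos hi
  have hxj : 0 < x j := lt_trans hxi hij
  have hNi := numer_pos_of_kappa_pos hp hi
  set s1 := Finset.univ.filter (fun k => x j < x k) with hs1
  set s2 := Finset.univ.filter (fun k => x k = x j) with hs2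
  have hdisj : Disjoint s1 s2 := by
    rw [Finset.disjoint_left]
    intro a ha1 ha2
    rw [hs1, Finset.mem_filter] at ha1
    rw [hs2, Finset.mem_filter] at ha2
    exact absurd ha2.2 (ne_of_gt ha1.2)
  have hsub : s1 ∪ s2 ⊆ Finset.univ.filter (fun k => x i < x k) := by
    intro a ha
    rcases Finset.mem_union.1 ha with ha | ha
    · rw [hs1, Finset.mem_filter] at ha
      exact Finset.mem_filter.2 ⟨Finset.mem_univ a, lt_trans hij ha.2⟩
    · rw [hs2, Finset.mem_filter] at ha
      exact Finset.mem_filter.2 ⟨Finset.mem_univ a, ha.2 ▸ hij⟩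
  have hsum : ∑ k ∈ s1, pbar k + ∑ k ∈ s2, pbar k ≤
      ∑ k ∈ Finset.univ.filter (fun k => x i < x k), pbar k := by
    rw [← Finset.sum_union hdisj]
    exact Finset.sum_le_sum_of_subset_of_nonneg hsub (fun a _ _ => (hp a).le)
  have hD2 : 0 < ∑ k ∈ s2, pbar k := denom_pos hp j
  have hq : (1:ℝ) ≤ (P - ∑ k ∈ s1, pbar k) / ∑ k ∈ s2, pbar k := by
    rw [le_div_iff₀ hD2, one_mul]
    have := hNi
    linarith
  have hfrac : frac n pbar x P j = 1 := by
    rw [show frac n pbar x P j = max 0 (min 1 ((P - ∑ k ∈ s1, pbar k) / ∑ k ∈ s2, pbar k))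
      from rfl, min_eq_left hq, max_eq_right zero_le_one]
  rw [kappa_eq_frac hxj, hfrac, mul_one]

lemma kappa_ratio_le (hp : ∀ i, 0 < pbar i) {i j : Fin n} (hij : x i < x j) :
    kappa n pbar x P i * pbar j ≤ kappa n pbar x P j * pbar i := by
  rcases lt_or_ge 0 (kappa n pbar x P i) with hpos | hle
  · rw [kappa_saturate hp hij hpos]
    calc kappa n pbar x P i * pbar j ≤ pbar i * pbar j :=
          mul_le_mul_of_nonneg_right (kappa_le hp i) (hp j).le
      _ = pbar j * pbar i := mul_comm _ _
  · have h1 : kappa n pbar x P i * pbar j ≤ 0 := mul_nonpos_of_nonpos_of_nonneg hle (hp j).le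
    have h2 : 0 ≤ kappa n pbar x P j * pbar i :=
      mul_nonneg (kappa_nonneg hp j) (hp i).le
    linarith

/-- Key combinatorial bound: if `A` is a strict "bottom set" of levels, then the policy
discharges `A` no faster than any admissible input does. -/
lemma sum_kappa_le (hp : ∀ i, 0 < pbar i) (A : Finset (Fin n)) (u : Fin n → ℝ)
    (hA : ∀ k, k ∉ A → ∀ j ∈ A, x j < x k)
    (hu : ∀ i, u i ∈ Set.Icc 0 (pbar i)) (hsum : ∑ i, u i = P) :
    ∑ j ∈ A, kappa n pbar x P j ≤ ∑ j ∈ A, u j := by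
  by_cases hact : ∀ j ∈ A, kappa n pbar x P j ≤ 0
  · have h1 : ∑ j ∈ A, kappa n pbar x P j ≤ 0 := Finset.sum_nonpos hact
    have h2 : 0 ≤ ∑ j ∈ A, u j := Finset.sum_nonneg fun j _ => (hu j).1
    linarith
  push_neg at hact
  obtain ⟨j₁, hj₁A, hj₁⟩ := hact
  set B := A.filter (fun j => 0 < kappa n pbar x P j) with hBdef
  have hBne : B.Nonempty := ⟨j₁, Finset.mem_filter.2 ⟨hj₁A, hj₁⟩⟩
  obtain ⟨j₀, hj₀B, hmin⟩ := B.exists_min_image x hBne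
  have hj₀A : j₀ ∈ A := (Finset.mem_filter.1 hj₀B).1
  have hκ₀ : 0 < kappa n pbar x P j₀ := (Finset.mem_filter.1 hj₀B).2
  have hx₀ : 0 < x j₀ := xpos_of_kappa_pos hκ₀
  set Sgt := Finset.univ.filter (fun k => x j₀ < x k) with hSgt
  set Seq := Finset.univ.filter (fun k => x k = x j₀) with hSeq
  set E := frac n pbar x P j₀ with hE
  -- split the sum over A
  have hsplit : ∑ j ∈ A, kappa n pbar x P j =
      ∑ j ∈ A.filter (fun j => x j₀ < x j), kappa n pbar x P j +
      ∑ j ∈ A.filter (fun j => ¬ x j₀ < x j), kappa n pbar x P j :=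
    (Finset.sum_filter_add_sum_filter_not A _ _).symm
  have hsplit2 : ∑ j ∈ A.filter (fun j => ¬ x j₀ < x j), kappa n pbar x P j =
      ∑ j ∈ (A.filter (fun j => ¬ x j₀ < x j)).filter (fun j => x j = x j₀),
        kappa n pbar x P j +
      ∑ j ∈ (A.filter (fun j => ¬ x j₀ < x j)).filter (fun j => ¬ x j = x j₀),
        kappa n pbar x P j :=
    (Finset.sum_filter_add_sum_filter_not _ _ _).symm
  -- the strictly-below part vanishes
  have hbelow : ∑ j ∈ (A.filter (fun j => ¬ x j₀ < x j)).filter (fun j => ¬ x j = x j₀),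
      kappa n pbar x P j = 0 := by
    apply Finset.sum_eq_zero
    intro j hj
    rw [Finset.mem_filter, Finset.mem_filter] at hj
    rcases hj with ⟨⟨hjA, hnlt⟩, hne⟩
    by_contra hk
    have hkpos : 0 < kappa n pbar x P j :=
      lt_of_le_of_ne (kappa_nonneg hp j) (Ne.symm hk)
    have : x j₀ ≤ x j := hmin j (Finset.mem_filter.2 ⟨hjA, hkpos⟩)
    rcases lt_or_eq_of_le this with h | h
    · exact hnlt h
    · exact hne h.symm
  -- the equal-level part is exactly `Seq`
  have hA2eq : (A.filter (fun j => ¬ x j₀ < x j)).filter (fun j => x j = x j₀) = Seq := by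
    ext k
    simp only [Finset.mem_filter, Finset.mem_univ, true_and, hSeq]
    constructor
    · rintro ⟨⟨_, _⟩, h⟩; exact h
    · intro h
      refine ⟨⟨?_, ?_⟩, h⟩
      · by_contra hk
        have := hA k hk j₀ hj₀A
        rw [h] at this
        exact lt_irrefl _ this
      · rw [h]; exact lt_irrefl _
  have heqsum : ∑ j ∈ Seq, kappa n pbar x P j = E * ∑ j ∈ Seq, pbar j := by
    rw [Finset.mul_sum]
    apply Finset.sum_congr rfl
    intro j hj
    rw [hSeq, Finset.mem_filter] at hj
    have hxj : 0 < x j := hj.2 ▸ hx₀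
    rw [kappa_eq_frac hxj, frac_congr hj.2, ← hE, mul_comm]
  -- bounds
  have hEb : E * ∑ j ∈ Seq, pbar j ≤ P - ∑ j ∈ Sgt, pbar j :=
    frac_le_ratio_of_kappa_pos hp hκ₀
  have htop : ∑ j ∈ A.filter (fun j => x j₀ < x j), kappa n pbar x P j ≤
      ∑ j ∈ A.filter (fun j => x j₀ < x j), pbar j :=
    Finset.sum_le_sum (fun j _ => kappa_le hp j)
  set Ac := Finset.univ \ A with hAc
  have hdisj : Disjoint (A.filter (fun j => x j₀ < x j)) Ac := by
    rw [Finset.disjoint_left]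
    intro a ha hac
    rw [hAc, Finset.mem_sdiff] at hac
    exact hac.2 (Finset.mem_of_mem_filter a ha)
  have hsub : A.filter (fun j => x j₀ < x j) ∪ Ac ⊆ Sgt := by
    intro a ha
    rcases Finset.mem_union.1 ha with ha | ha
    · rw [Finset.mem_filter] at ha
      exact Finset.mem_filter.2 ⟨Finset.mem_univ a, ha.2⟩
    · rw [hAc, Finset.mem_sdiff] at ha
      exact Finset.mem_filter.2 ⟨Finset.mem_univ a, hA a ha.2 j₀ hj₀A⟩
  have hcomp : ∑ j ∈ A.filter (fun j => x j₀ < x j), pbar j + ∑ j ∈ Ac, pbar j ≤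
      ∑ j ∈ Sgt, pbar j := by
    rw [← Finset.sum_union hdisj]
    exact Finset.sum_le_sum_of_subset_of_nonneg hsub (fun a _ _ => (hp a).le)
  have hAcu : ∑ j ∈ Ac, u j ≤ ∑ j ∈ Ac, pbar j :=
    Finset.sum_le_sum (fun j _ => (hu j).2)
  have huniv : ∑ j ∈ Ac, u j + ∑ j ∈ A, u j = P := by
    rw [hAc, Finset.sum_sdiff (Finset.subset_univ A)]
    exact hsum
  rw [hsplit, hsplit2, hbelow, hA2eq, heqsum]
  linarith

end PolicyAux

open PolicyAux in
/-- Order preservation for the closed loop: the waterfall policy never lets a lower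
time-to-go overtake a higher one. -/
lemma zs_order_preserved {n : ℕ} {pbar : Fin n → ℝ} {Pr : ℝ → ℝ} {zs : ℝ → Fin n → ℝ}
    (hp : ∀ i, 0 < pbar i) (hcl : ClosedLoop n pbar Pr zs)
    {j k : Fin n} {t₀ t₁ : ℝ} (ht₀ : 0 ≤ t₀) (ht : t₀ ≤ t₁)
    (h : zs t₀ k ≤ zs t₀ j) : zs t₁ k ≤ zs t₁ j := by
  by_contra hlt
  push_neg at hlt
  set d : ℝ → ℝ := fun t => zs t j - zs t k with hd
  have hderiv : ∀ t, 0 ≤ t → HasDerivAt d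
      (-(kappa n pbar (zs t) (Pr t) j) / pbar j - -(kappa n pbar (zs t) (Pr t) k) / pbar k) t :=
    fun t htt => (hcl t htt j).sub (hcl t htt k)
  have hcont : ContinuousOn d (Set.Icc t₀ t₁) := fun t htt =>
    ((hderiv t (le_trans ht₀ htt.1)).continuousAt).continuousWithinAt
  set S := Set.Icc t₀ t₁ ∩ d ⁻¹' Set.Ici 0 with hSdef
  have hScl : IsClosed S :=
    hcont.preimage_isClosed_of_isClosed isClosed_Icc isClosed_Ici
  have ht₀S : t₀ ∈ S := ⟨Set.left_mem_Icc.2 ht, by simpa [hd] using h⟩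
  have hbdd : BddAbove S := BddAbove.mono Set.inter_subset_left bddAbove_Icc
  set s := sSup S with hs
  have hsS : s ∈ S := hScl.csSup_mem ⟨t₀, ht₀S⟩ hbdd
  have hst₀ : t₀ ≤ s := le_csSup hbdd ht₀S
  have hst₁ : s ≤ t₁ := hsS.1.2
  have hds : 0 ≤ d s := hsS.2
  have hdt₁ : d t₁ < 0 := sub_neg.2 hlt
  have hneq : s ≠ t₁ := fun h' => absurd (h' ▸ hds) (not_le.2 hdt₁)
  have hslt : s < t₁ := lt_of_le_of_ne hst₁ hneq
  have hneg : ∀ t ∈ Set.Ioc s t₁, d t < 0 := by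
    intro t htt
    by_contra hge
    push_neg at hge
    have htS : t ∈ S := ⟨⟨le_trans hst₀ htt.1.le, htt.2⟩, hge⟩
    exact absurd (le_csSup hbdd htS) (not_le.2 htt.1)
  have hmono : MonotoneOn d (Set.Icc s t₁) := by
    apply monotoneOn_of_deriv_nonneg (convex_Icc s t₁)
    · exact fun t htt => ((hderiv t (le_trans (le_trans ht₀ hst₀) htt.1)).continuousAt).continuousWithinAt
    · intro t htt
      rw [interior_Icc] at htt
      exact ((hderiv t (le_trans (le_trans ht₀ hst₀) htt.1.le)).differentiableAt).differentiableWithinAt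
    · intro t htt
      rw [interior_Icc] at htt
      have ht0 : (0:ℝ) ≤ t := le_trans (le_trans ht₀ hst₀) htt.1.le
      rw [(hderiv t ht0).deriv]
      have hdt : d t < 0 := hneg t ⟨htt.1, htt.2.le⟩
      have hjk : zs t j < zs t k := sub_neg.1 hdt
      have hratio := kappa_ratio_le (x := zs t) (P := Pr t) hp hjk
      have hdiv : kappa n pbar (zs t) (Pr t) j / pbar j ≤
          kappa n pbar (zs t) (Pr t) k / pbar k :=
        (div_le_div_iff₀ (hp j) (hp k)).2 hratio
      have e1 : -(kappa n pbar (zs t) (Pr t) j) / pbar j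
          = -(kappa n pbar (zs t) (Pr t) j / pbar j) := neg_div _ _
      have e2 : -(kappa n pbar (zs t) (Pr t) k) / pbar k
          = -(kappa n pbar (zs t) (Pr t) k / pbar k) := neg_div _ _
      rw [e1, e2]
      linarith
  have := hmono ⟨le_refl s, hslt.le⟩ ⟨hslt.le, le_refl t₁⟩ hslt.le
  linarith [hneg t₁ ⟨hslt, le_refl t₁⟩]

open PolicyAux in
/-- Support inclusion: any state the policy has depleted must also be depleted by any
other fulfilling trajectory from the same initial condition. -/
lemma support_incl {n : ℕ} {pbar : Fin n → ℝ} {Pr : ℝ → ℝ} {zt zs : ℝ → Fin n → ℝ}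
    (hp : ∀ i, 0 < pbar i) (hf : Fulfils n pbar Pr zt)
    (h0 : zs 0 = zt 0) (hcl : ClosedLoop n pbar Pr zs)
    (hnn : ∀ t, 0 ≤ t → ∀ i, 0 ≤ zs t i)
    {T : ℝ} (hT : 0 ≤ T) {i : Fin n} (hi : zs T i = 0) : zt T i = 0 := by
  obtain ⟨u, hu, husum, hud, hznn⟩ := hf
  set A := Finset.univ.filter (fun j => zs T j = 0) with hAdef
  have hiA : i ∈ A := Finset.mem_filter.2 ⟨Finset.mem_univ i, hi⟩
  set F : ℝ → ℝ := fun t => ∑ j ∈ A, pbar j * (zs t j - zt t j) with hF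
  have hFderiv : ∀ t, 0 ≤ t → HasDerivAt F
      (∑ j ∈ A, pbar j * (-(kappa n pbar (zs t) (Pr t) j) / pbar j - -(u t j) / pbar j)) t :=
    fun t ht => HasDerivAt.fun_sum (fun j _ => ((hcl t ht j).sub (hud t ht j)).const_mul (pbar j))
  have hval : ∀ t, 0 ≤ t → t ≤ T →
      0 ≤ ∑ j ∈ A, pbar j * (-(kappa n pbar (zs t) (Pr t) j) / pbar j - -(u t j) / pbar j) := by
    intro t ht htT
    have hsimp : ∑ j ∈ A, pbar j * (-(kappa n pbar (zs t) (Pr t) j) / pbar j - -(u t j) / pbar j)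
        = ∑ j ∈ A, (u t j - kappa n pbar (zs t) (Pr t) j) := by
      apply Finset.sum_congr rfl
      intro j _
      have hpj : pbar j ≠ 0 := (hp j).ne'
      field_simp
      ring
    rw [hsimp, Finset.sum_sub_distrib, sub_nonneg]
    apply sum_kappa_le hp A (u t) _ (hu t ht) (husum t ht)
    intro k hk q hq
    rw [hAdef, Finset.mem_filter] at hq hk
    have hqT : zs T q = 0 := hq.2
    have hkT : 0 < zs T k := by
      rcases (hnn T hT k).lt_or_eq with h | h
      · exact h
      · exact absurd h.symm (fun hh => hk ⟨Finset.mem_univ k, hh⟩)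
    by_contra hle
    push_neg at hle
    have := zs_order_preserved hp hcl ht htT hle
    rw [hqT] at this
    linarith
  have hmono : MonotoneOn F (Set.Icc 0 T) := by
    apply monotoneOn_of_deriv_nonneg (convex_Icc 0 T)
    · exact fun t htt => ((hFderiv t htt.1).continuousAt).continuousWithinAt
    · intro t htt
      rw [interior_Icc] at htt
      exact ((hFderiv t htt.1.le).differentiableAt).differentiableWithinAt
    · intro t htt
      rw [interior_Icc] at htt
      rw [(hFderiv t htt.1.le).deriv]
      exact hval t htt.1.le htt.2.le
  have hF0 : F 0 = 0 := by
    rw [hF]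
    apply Finset.sum_eq_zero
    intro j _
    rw [congrFun h0 j, sub_self, mul_zero]
  have hFT : F 0 ≤ F T := hmono ⟨le_refl 0, hT⟩ ⟨hT, le_refl T⟩ hT
  have hFTval : F T = ∑ j ∈ A, (- (pbar j * zt T j)) := by
    rw [hF]
    apply Finset.sum_congr rfl
    intro j hj
    rw [hAdef, Finset.mem_filter] at hj
    rw [hj.2]
    ring
  have hsum0 : ∑ j ∈ A, pbar j * zt T j ≤ 0 := by
    have := hF0 ▸ hFT
    rw [hFTval, Finset.sum_neg_distrib] at this
    linarith
  have hterms : ∀ j ∈ A, 0 ≤ pbar j * zt T j :=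
    fun j _ => mul_nonneg (hp j).le (hznn T hT j)
  have hall : ∀ j ∈ A, pbar j * zt T j = 0 := by
    rw [← Finset.sum_eq_zero_iff_of_nonneg hterms]
    exact le_antisymm hsum0 (Finset.sum_nonneg hterms)
  have := hall i hiA
  rcases mul_eq_zero.1 this with h | h
  · exact absurd h (hp i).ne'
  · exact h

/-- the policy maximises the instantaneous available power among all
trajectories fulfilling the same reference from the same initial state. -/
theorem closedLoop_maximises_availPower (n : ℕ) (pbar : Fin n → ℝ) (Pr : ℝ → ℝ)
    (zt zs : ℝ → Fin n → ℝ) (hp : ∀ i, 0 < pbar i)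
    (hf : Fulfils n pbar Pr zt)
    (h0 : zs 0 = zt 0) (hcl : ClosedLoop n pbar Pr zs)
    (hnn : ∀ t, 0 ≤ t → ∀ i, 0 ≤ zs t i) :
    ∀ t, 0 ≤ t → availPower n pbar (zt t) ≤ availPower n pbar (zs t) := by
  intro t ht
  obtain ⟨u, hu, husum, hud, hznn⟩ := hf
  unfold availPower
  apply Finset.sum_le_sum_of_subset_of_nonneg
  · intro i hi
    rw [Finset.mem_filter] at hi ⊢
    refine ⟨Finset.mem_univ i, ?_⟩
    rcases (hnn t ht i).lt_or_eq with h | h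
    · exact h
    · exfalso
      have hz : zs t i = 0 := h.symm
      have := support_incl hp ⟨u, hu, husum, hud, hznn⟩ h0 hcl hnn ht hz
      rw [this] at hi
      exact lt_irrefl 0 hi.2
  · exact fun i _ _ => (hp i).le
end
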